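/- arXiv:2407.05495 — 4 statements merged into one kernel-verified Lean document; each statement's English description precedes it below -/
import Mathlib

section
/- Suppose every window g_l has support of diameter less than M (i.e. max supp(g_l) − min supp(g_l) < M). Then the multiwindow Gabor system G(g,L,M,N) = {E_{m/M}T_{nN}g_l} is a frame for ℓ²(S) with bounds A, B if and only if A ≤ M ∑_{l=0}^{L-1} ∑_{n∈ℤ} |g_l(j−nN)|² ≤ B for every j ∈ S ∩ {0,...,N−1}. In this case the frame operator is the multiplication operator S f(j) = (M ∑_l ∑_{n∈ℤ} |g_l(j−nN)|²) f(j). -/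
open Complex MeasureTheory

noncomputable section

/-- The ℓ² "inner product" ⟨f,g⟩ = ∑_{j∈ℤ} f(j)·conj(g(j)). -/
def dotP (f g : ℤ → ℂ) : ℂ := ∑' j : ℤ, f j * (starRingEnd ℂ) (g j)

/-- Squared ℓ² norm. -/
def normSq2 (f : ℤ → ℂ) : ℝ := ∑' j : ℤ, ‖f j‖ ^ 2

/-- Membership in ℓ²(S): square-summable and vanishing off S. -/
def MemL2S (S : Set ℤ) (f : ℤ → ℂ) : Prop := Memℓp f 2 ∧ ∀ j ∉ S, f j = 0

/-- S ⊆ ℤ is an Nℤ-periodic (nonempty) set. -/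
def IsPeriodicSet (N : ℕ) (S : Set ℤ) : Prop :=
  S.Nonempty ∧ ∀ j ∈ S, ∀ n : ℤ, j + n * (N : ℤ) ∈ S

/-- The multiwindow Gabor family {E_{m/M}T_{nN} g_l}. -/
def gaborFam (L M N : ℕ) (g : ℕ → ℤ → ℂ) : Fin L × ℤ × Fin M → ℤ → ℂ :=
  fun p j =>
    Complex.exp (2 * (Real.pi : ℂ) * Complex.I * ((p.2.2 : ℕ) : ℂ) * (j : ℂ) / (M : ℂ)) *
      g p.1 (j - p.2.1 * (N : ℤ))

/-- Frame for ℓ²(S) with bounds A, B. -/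
def IsFrameOn {ι : Type*} (S : Set ℤ) (F : ι → ℤ → ℂ) (A B : ℝ) : Prop :=
  ∀ f : ℤ → ℂ, MemL2S S f →
    A * normSq2 f ≤ ∑' i, ‖dotP f (F i)‖ ^ 2 ∧
      ∑' i, ‖dotP f (F i)‖ ^ 2 ≤ B * normSq2 f

/-- Bessel sequence in ℓ²(S). -/
def IsBesselOn {ι : Type*} (S : Set ℤ) (F : ι → ℤ → ℂ) : Prop :=
  ∃ B : ℝ, 0 < B ∧ ∀ f : ℤ → ℂ, MemL2S S f →
    ∑' i, ‖dotP f (F i)‖ ^ 2 ≤ B * normSq2 f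

/-- Exact frame (Riesz basis): a frame that ceases to be a frame upon
removing any single element. -/
def IsExactFrameOn {ι : Type*} (S : Set ℤ) (F : ι → ℤ → ℂ) : Prop :=
  (∃ A B : ℝ, 0 < A ∧ A ≤ B ∧ IsFrameOn S F A B) ∧
  ∀ i₀ : ι, ¬ ∃ A B : ℝ, 0 < A ∧ A ≤ B ∧
      IsFrameOn S (fun i : {i // i ≠ i₀} => F (i : ι)) A B

/-- Orthonormal basis: orthonormal family that is a Parseval frame. -/
def IsONBOn {ι : Type*} [DecidableEq ι] (S : Set ℤ) (F : ι → ℤ → ℂ) : Prop :=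
  (∀ i i' : ι, dotP (F i) (F i') = if i = i' then 1 else 0) ∧ IsFrameOn S F 1 1

/-- The matrix entry (M_φ(j)M_ψ*(j))_{0,k} = ∑_n φ(j−nN)·conj(ψ(j+kM−nN)). -/
def matEntry (M N : ℕ) (φ ψ : ℤ → ℂ) (j k : ℤ) : ℂ :=
  ∑' n : ℤ, φ (j - n * (N : ℤ)) * (starRingEnd ℂ) (ψ (j + k * (M : ℤ) - n * (N : ℤ)))

/-- The discrete Zak transform z_M g (j, θ) = ∑_k g(j+kM) e^{2πikθ}. -/
def zak (M : ℕ) (g : ℤ → ℂ) (j : ℤ) (θ : ℝ) : ℂ :=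
  ∑' k : ℤ, g (j + k * (M : ℤ)) *
    Complex.exp (2 * (Real.pi : ℂ) * Complex.I * (k : ℂ) * (θ : ℂ))

end

namespace Stmt4Aux
open Complex

/-- The exponential factor appearing in the Gabor family. -/
noncomputable def eF (M : ℕ) (m : ℕ) (j : ℤ) : ℂ :=
  Complex.exp (2 * (Real.pi : ℂ) * Complex.I * (m : ℂ) * (j : ℂ) / (M : ℂ))

lemma dft (M : ℕ) (hM : 0 < M) (d : ℤ) :
    ∑ m : Fin M, eF M m d = if (M : ℤ) ∣ d then (M : ℂ) else 0 := by
  have hM0 : (M : ℂ) ≠ 0 := Nat.cast_ne_zero.mpr hM.ne'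
  have h2 : (2 : ℂ) * (Real.pi : ℂ) * Complex.I ≠ 0 := by
    simp [Complex.ofReal_ne_zero, Real.pi_ne_zero, Complex.I_ne_zero]
  have hterm : ∀ m : ℕ, eF M m d =
      Complex.exp (2 * (Real.pi : ℂ) * Complex.I * (d : ℂ) / (M : ℂ)) ^ m := by
    intro m
    rw [eF, ← Complex.exp_nat_mul]
    ring_nf
  set r : ℂ := Complex.exp (2 * (Real.pi : ℂ) * Complex.I * (d : ℂ) / (M : ℂ)) with hr
  by_cases hdvd : (M : ℤ) ∣ d
  · have hr1 : r = 1 := by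
      obtain ⟨k, hk⟩ := hdvd
      rw [hr, Complex.exp_eq_one_iff]
      refine ⟨k, ?_⟩
      rw [hk]
      push_cast
      field_simp
    simp [hterm, hr1, if_pos hdvd]
  · have hr1 : r ≠ 1 := by
      intro h
      rw [hr, Complex.exp_eq_one_iff] at h
      obtain ⟨n, hn⟩ := h
      rw [div_eq_iff hM0] at hn
      apply hdvd
      refine ⟨n, ?_⟩
      have : (d : ℂ) = (M : ℂ) * n := by
        apply mul_left_cancel₀ h2
        linear_combination hn
      exact_mod_cast this
    have hrM : r ^ M = 1 := by
      rw [hr, ← Complex.exp_nat_mul, Complex.exp_eq_one_iff]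
      refine ⟨d, ?_⟩
      field_simp
    simp only [hterm, ← hr]
    rw [Fin.sum_univ_eq_sum_range, geom_sum_eq hr1, hrM]
    simp [if_neg hdvd]


lemma conj_eF_mul_eF (M : ℕ) (m : ℕ) (j j' : ℤ) :
    (starRingEnd ℂ) (eF M m j') * eF M m j = eF M m (j - j') := by
  rw [eF, eF, eF, ← Complex.exp_conj, ← Complex.exp_add]
  congr 1
  have : (starRingEnd ℂ) (2 * (Real.pi : ℂ) * Complex.I * (m : ℂ) * (j' : ℂ) / (M : ℂ)) =
      2 * (Real.pi : ℂ) * (-Complex.I) * (m : ℂ) * (j' : ℂ) / (M : ℂ) := by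
    simp [map_div₀, map_mul, map_ofNat, Complex.conj_I, Complex.conj_ofReal]
  rw [this]
  push_cast
  ring

lemma dvd_eq_of_mem_Ico (M : ℕ) (t j j' : ℤ) (hj : j ∈ Finset.Ico t (t + (M : ℤ)))
    (hj' : j' ∈ Finset.Ico t (t + (M : ℤ))) (hdvd : (M : ℤ) ∣ (j - j')) : j = j' := by
  rw [Finset.mem_Ico] at hj hj'
  obtain ⟨k, hk⟩ := hdvd
  have hk0 : k = 0 := by
    rcases lt_trichotomy k 0 with h | h | h
    · nlinarith [hj.1, hj.2, hj'.1, hj'.2]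
    · exact h
    · nlinarith [hj.1, hj.2, hj'.1, hj'.2]
  rw [hk0, mul_zero] at hk
  omega

/-- Key collapse. -/
lemma key (M : ℕ) (hM : 0 < M) (t : ℤ) (c : ℤ → ℂ) (j : ℤ)
    (hj : j ∈ Finset.Ico t (t + (M : ℤ))) :
    ∑ m : Fin M, (∑ j' ∈ Finset.Ico t (t + (M : ℤ)), c j' * (starRingEnd ℂ) (eF M m j')) * eF M m j
      = (M : ℂ) * c j := by
  have step1 : ∀ m : Fin M,
      (∑ j' ∈ Finset.Ico t (t + (M : ℤ)), c j' * (starRingEnd ℂ) (eF M m j')) * eF M m j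
        = ∑ j' ∈ Finset.Ico t (t + (M : ℤ)), c j' * eF M m (j - j') := by
    intro m
    rw [Finset.sum_mul]
    refine Finset.sum_congr rfl fun j' _ => ?_
    rw [mul_assoc, conj_eF_mul_eF]
  simp only [step1]
  rw [Finset.sum_comm]
  have step2 : ∀ j' ∈ Finset.Ico t (t + (M : ℤ)),
      (∑ m : Fin M, c j' * eF M m (j - j')) = c j' * (if (M : ℤ) ∣ (j - j') then (M : ℂ) else 0) := by
    intro j' _
    rw [← Finset.mul_sum, dft M hM]
  rw [Finset.sum_congr rfl step2]
  rw [Finset.sum_eq_single_of_mem j hj]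
  · rw [if_pos ⟨0, by ring⟩]; ring
  · intro j' hj' hne
    rw [if_neg, mul_zero]
    intro hdvd
    exact hne (dvd_eq_of_mem_Ico M t j j' hj hj' hdvd).symm

lemma norm_sq_complex (z : ℂ) : ((‖z‖ : ℂ)) ^ 2 = z * (starRingEnd ℂ) z := by
  rw [Complex.mul_conj]
  norm_cast
  exact Complex.sq_norm z

/-- Parseval for the windowed DFT. -/
lemma parseval (M : ℕ) (hM : 0 < M) (t : ℤ) (c : ℤ → ℂ) :
    ∑ m : Fin M, ‖∑ j ∈ Finset.Ico t (t + (M : ℤ)), c j * (starRingEnd ℂ) (eF M m j)‖ ^ 2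
      = (M : ℝ) * ∑ j ∈ Finset.Ico t (t + (M : ℤ)), ‖c j‖ ^ 2 := by
  set T := Finset.Ico t (t + (M : ℤ)) with hT
  have hC : ((∑ m : Fin M, ‖∑ j ∈ T, c j * (starRingEnd ℂ) (eF M m j)‖ ^ 2 : ℝ) : ℂ)
      = ((((M : ℝ) * ∑ j ∈ T, ‖c j‖ ^ 2 : ℝ)) : ℂ) := by
    push_cast
    simp only [norm_sq_complex]
    have expand : ∀ m : Fin M,
        (∑ j ∈ T, c j * (starRingEnd ℂ) (eF M m j)) *
          (starRingEnd ℂ) (∑ j ∈ T, c j * (starRingEnd ℂ) (eF M m j))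
        = ∑ j ∈ T, ((starRingEnd ℂ) (c j)) *
            ((∑ j' ∈ T, c j' * (starRingEnd ℂ) (eF M m j')) * eF M m j) := by
      intro m
      rw [map_sum, Finset.mul_sum]
      refine Finset.sum_congr rfl fun j _ => ?_
      rw [map_mul, Complex.conj_conj]
      ring
    simp only [expand]
    rw [Finset.sum_comm]
    have step : ∀ j ∈ T,
        (∑ m : Fin M, ((starRingEnd ℂ) (c j)) *
            ((∑ j' ∈ T, c j' * (starRingEnd ℂ) (eF M m j')) * eF M m j))
          = ((starRingEnd ℂ) (c j)) * ((M : ℂ) * c j) := by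
      intro j hj
      rw [← Finset.mul_sum, key M hM t c j (hT ▸ hj)]
    rw [Finset.sum_congr rfl step, Finset.mul_sum]
    refine Finset.sum_congr rfl fun j _ => ?_
    ring
  exact_mod_cast hC


open scoped ENNReal NNReal

lemma enn_sq (z : ℂ) : ((‖z‖₊ : ℝ≥0∞)) ^ 2 = ENNReal.ofReal (‖z‖ ^ 2) := by
  rw [ENNReal.ofReal_pow (norm_nonneg z)]
  exact congrArg (· ^ 2) (ofReal_norm z).symm

lemma tsum_sq_toReal {ι : Type*} (u : ι → ℂ) :
    ∑' i, ‖u i‖ ^ 2 = (∑' i, ((‖u i‖₊ : ℝ≥0∞)) ^ 2).toReal := by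
  rw [ENNReal.tsum_toReal_eq (fun i => ENNReal.pow_ne_top ENNReal.coe_ne_top)]
  refine tsum_congr fun i => ?_
  simp [ENNReal.toReal_pow]

section Window

variable (M N : ℕ) (φ : ℤ → ℂ) (t : ℤ)

lemma window_vanish (hφ : ∀ j, φ j ≠ 0 → t ≤ j ∧ j < t + (M : ℤ)) (n j : ℤ)
    (hj : j ∉ Finset.Ico (t + n * (N : ℤ)) (t + n * (N : ℤ) + (M : ℤ))) :
    φ (j - n * (N : ℤ)) = 0 := by
  by_contra h
  exact hj (Finset.mem_Ico.mpr (by have := hφ _ h; omega))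

lemma dot_expand (hφ : ∀ j, φ j ≠ 0 → t ≤ j ∧ j < t + (M : ℤ)) (f : ℤ → ℂ) (n : ℤ) (m : ℕ) :
    ∑' j : ℤ, f j * (starRingEnd ℂ) (eF M m j * φ (j - n * (N : ℤ)))
      = ∑ j ∈ Finset.Ico (t + n * (N : ℤ)) (t + n * (N : ℤ) + (M : ℤ)),
          (f j * (starRingEnd ℂ) (φ (j - n * (N : ℤ)))) * (starRingEnd ℂ) (eF M m j) := by
  rw [tsum_eq_sum (s := Finset.Ico (t + n * (N : ℤ)) (t + n * (N : ℤ) + (M : ℤ)))]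
  · exact Finset.sum_congr rfl fun j _ => by rw [map_mul]; ring
  · intro j hj
    rw [window_vanish M N φ t hφ n j hj]
    simp

lemma msum (hM : 0 < M) (hφ : ∀ j, φ j ≠ 0 → t ≤ j ∧ j < t + (M : ℤ)) (f : ℤ → ℂ) (n : ℤ) :
    ∑ m : Fin M, ‖∑' j : ℤ, f j * (starRingEnd ℂ) (eF M m j * φ (j - n * (N : ℤ)))‖ ^ 2
      = (M : ℝ) * ∑ j ∈ Finset.Ico (t + n * (N : ℤ)) (t + n * (N : ℤ) + (M : ℤ)),
          ‖f j‖ ^ 2 * ‖φ (j - n * (N : ℤ))‖ ^ 2 := by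
  have h1 : ∀ m : Fin M,
      ‖∑' j : ℤ, f j * (starRingEnd ℂ) (eF M m j * φ (j - n * (N : ℤ)))‖ ^ 2
        = ‖∑ j ∈ Finset.Ico (t + n * (N : ℤ)) (t + n * (N : ℤ) + (M : ℤ)),
            (f j * (starRingEnd ℂ) (φ (j - n * (N : ℤ)))) * (starRingEnd ℂ) (eF M (m : ℕ) j)‖ ^ 2 := by
    intro m; rw [dot_expand M N φ t hφ]
  simp only [h1]
  have h2 := parseval M hM (t + n * (N : ℤ)) (fun j => f j * (starRingEnd ℂ) (φ (j - n * (N : ℤ))))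
  rw [h2]
  congr 1
  refine Finset.sum_congr rfl fun j _ => ?_
  rw [norm_mul, starRingEnd_apply, norm_star, mul_pow]

lemma nsupport (hN : 0 < N) (hφ : ∀ j, φ j ≠ 0 → t ≤ j ∧ j < t + (M : ℤ)) (j : ℤ) (n : ℤ)
    (hn : n ∉ Finset.Icc (-(|j| + |t| + (M : ℤ))) (|j| + |t| + (M : ℤ))) :
    φ (j - n * (N : ℤ)) = 0 := by
  by_contra h
  apply hn
  obtain ⟨h1, h2⟩ := hφ _ h
  have ht1 : -|t| ≤ t := neg_abs_le t
  have ht2 : t ≤ |t| := le_abs_self t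
  have habs : |j - n * (N : ℤ)| ≤ |t| + M := abs_le.mpr ⟨by linarith, by linarith⟩
  have h3 : |n * (N : ℤ)| ≤ |j| + (|t| + (M : ℤ)) := by
    have : n * (N : ℤ) = j - (j - n * (N : ℤ)) := by ring
    rw [this]
    exact (abs_sub _ _).trans (by linarith)
  have h4 : |n| ≤ |n * (N : ℤ)| := by
    rw [abs_mul]
    have hN1 : (1 : ℤ) ≤ |(N : ℤ)| := by
      rw [_root_.abs_of_nonneg (by positivity)]
      exact_mod_cast hN
    exact le_mul_of_one_le_right (abs_nonneg n) hN1
  have := h4.trans h3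
  rw [Finset.mem_Icc]
  constructor <;> [linarith [neg_abs_le n]; linarith [le_abs_self n]]

lemma summable_n (hN : 0 < N) (hφ : ∀ j, φ j ≠ 0 → t ≤ j ∧ j < t + (M : ℤ)) (j : ℤ) :
    Summable (fun n : ℤ => ‖φ (j - n * (N : ℤ))‖ ^ 2) := by
  apply summable_of_ne_finset_zero
    (s := Finset.Icc (-(|j| + |t| + (M : ℤ))) (|j| + |t| + (M : ℤ)))
  intro n hn
  rw [nsupport M N φ t hN hφ j n hn]
  simp

lemma tsum_n_ofReal (hN : 0 < N) (hφ : ∀ j, φ j ≠ 0 → t ≤ j ∧ j < t + (M : ℤ)) (j : ℤ) :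
    ∑' n : ℤ, ((‖φ (j - n * (N : ℤ))‖₊ : ℝ≥0∞)) ^ 2
      = ENNReal.ofReal (∑' n : ℤ, ‖φ (j - n * (N : ℤ))‖ ^ 2) := by
  rw [ENNReal.ofReal_tsum_of_nonneg (fun n => sq_nonneg _) (summable_n M N φ t hN hφ j)]
  exact tsum_congr fun n => (enn_sq _)

lemma periodic (j q : ℤ) :
    ∑' n : ℤ, ‖φ ((j + q * (N : ℤ)) - n * (N : ℤ))‖ ^ 2
      = ∑' n : ℤ, ‖φ (j - n * (N : ℤ))‖ ^ 2 := by
  have h := Equiv.tsum_eq (Equiv.addRight q)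
    (fun n : ℤ => ‖φ ((j + q * (N : ℤ)) - n * (N : ℤ))‖ ^ 2)
  rw [← h]
  refine tsum_congr fun n => ?_
  have harg : j + q * (N : ℤ) - ((Equiv.addRight q) n) * (N : ℤ) = j - n * (N : ℤ) := by
    simp [Equiv.coe_addRight]
    ring
  rw [harg]

lemma enn_window (hM : 0 < M) (hN : 0 < N)
    (hφ : ∀ j, φ j ≠ 0 → t ≤ j ∧ j < t + (M : ℤ)) (f : ℤ → ℂ) :
    ∑' p : ℤ × Fin M,
        ((‖∑' j : ℤ, f j * (starRingEnd ℂ) (eF M (p.2 : ℕ) j * φ (j - p.1 * (N : ℤ)))‖₊ : ℝ≥0∞)) ^ 2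
      = ∑' j : ℤ, ((‖f j‖₊ : ℝ≥0∞)) ^ 2 * ((M : ℝ≥0∞) * ∑' n : ℤ, ((‖φ (j - n * (N : ℤ))‖₊ : ℝ≥0∞)) ^ 2) := by
  rw [ENNReal.tsum_prod']
  have h1 : ∀ n : ℤ,
      ∑' m : Fin M, ((‖∑' j : ℤ, f j * (starRingEnd ℂ) (eF M (m : ℕ) j * φ (j - n * (N : ℤ)))‖₊ : ℝ≥0∞)) ^ 2
        = (M : ℝ≥0∞) * ∑' j : ℤ, ((‖f j‖₊ : ℝ≥0∞)) ^ 2 * ((‖φ (j - n * (N : ℤ))‖₊ : ℝ≥0∞)) ^ 2 := by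
    intro n
    rw [tsum_fintype]
    calc ∑ m : Fin M, ((‖∑' j : ℤ, f j * (starRingEnd ℂ) (eF M (m : ℕ) j * φ (j - n * (N : ℤ)))‖₊ : ℝ≥0∞)) ^ 2
        = ∑ m : Fin M, ENNReal.ofReal (‖∑' j : ℤ, f j * (starRingEnd ℂ) (eF M (m : ℕ) j * φ (j - n * (N : ℤ)))‖ ^ 2) := by
          exact Finset.sum_congr rfl fun m _ => enn_sq _
      _ = ENNReal.ofReal (∑ m : Fin M, ‖∑' j : ℤ, f j * (starRingEnd ℂ) (eF M (m : ℕ) j * φ (j - n * (N : ℤ)))‖ ^ 2) := by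
          rw [ENNReal.ofReal_sum_of_nonneg (fun m _ => sq_nonneg _)]
      _ = ENNReal.ofReal ((M : ℝ) * ∑ j ∈ Finset.Ico (t + n * (N : ℤ)) (t + n * (N : ℤ) + (M : ℤ)),
            ‖f j‖ ^ 2 * ‖φ (j - n * (N : ℤ))‖ ^ 2) := by
          rw [msum M N φ t hM hφ f n]
      _ = (M : ℝ≥0∞) * ∑ j ∈ Finset.Ico (t + n * (N : ℤ)) (t + n * (N : ℤ) + (M : ℤ)),
            ((‖f j‖₊ : ℝ≥0∞)) ^ 2 * ((‖φ (j - n * (N : ℤ))‖₊ : ℝ≥0∞)) ^ 2 := by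
          rw [ENNReal.ofReal_mul (by positivity), ENNReal.ofReal_natCast,
            ENNReal.ofReal_sum_of_nonneg (fun j _ => by positivity)]
          congr 1
          refine Finset.sum_congr rfl fun j _ => ?_
          rw [ENNReal.ofReal_mul (sq_nonneg _), enn_sq, enn_sq]
      _ = (M : ℝ≥0∞) * ∑' j : ℤ, ((‖f j‖₊ : ℝ≥0∞)) ^ 2 * ((‖φ (j - n * (N : ℤ))‖₊ : ℝ≥0∞)) ^ 2 := by
          congr 1
          rw [tsum_eq_sum (s := Finset.Ico (t + n * (N : ℤ)) (t + n * (N : ℤ) + (M : ℤ)))]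
          intro j hj
          rw [window_vanish M N φ t hφ n j hj]
          simp
  calc ∑' n : ℤ, ∑' m : Fin M, ((‖∑' j : ℤ, f j * (starRingEnd ℂ) (eF M (m : ℕ) j * φ (j - n * (N : ℤ)))‖₊ : ℝ≥0∞)) ^ 2
      = ∑' n : ℤ, (M : ℝ≥0∞) * ∑' j : ℤ, ((‖f j‖₊ : ℝ≥0∞)) ^ 2 * ((‖φ (j - n * (N : ℤ))‖₊ : ℝ≥0∞)) ^ 2 := by
        exact tsum_congr h1
    _ = (M : ℝ≥0∞) * ∑' n : ℤ, ∑' j : ℤ, ((‖f j‖₊ : ℝ≥0∞)) ^ 2 * ((‖φ (j - n * (N : ℤ))‖₊ : ℝ≥0∞)) ^ 2 := by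
        rw [ENNReal.tsum_mul_left]
    _ = (M : ℝ≥0∞) * ∑' j : ℤ, ∑' n : ℤ, ((‖f j‖₊ : ℝ≥0∞)) ^ 2 * ((‖φ (j - n * (N : ℤ))‖₊ : ℝ≥0∞)) ^ 2 := by
        rw [ENNReal.tsum_comm]
    _ = (M : ℝ≥0∞) * ∑' j : ℤ, ((‖f j‖₊ : ℝ≥0∞)) ^ 2 * ∑' n : ℤ, ((‖φ (j - n * (N : ℤ))‖₊ : ℝ≥0∞)) ^ 2 := by
        congr 1
        exact tsum_congr fun j => ENNReal.tsum_mul_left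
    _ = ∑' j : ℤ, ((‖f j‖₊ : ℝ≥0∞)) ^ 2 * ((M : ℝ≥0∞) * ∑' n : ℤ, ((‖φ (j - n * (N : ℤ))‖₊ : ℝ≥0∞)) ^ 2) := by
        rw [← ENNReal.tsum_mul_left]
        exact tsum_congr fun j => by ring

/-- Finite-sum version of the frame operator computation for a single window. -/
lemma operator_window (hM : 0 < M) (hN : 0 < N)
    (hφ : ∀ j, φ j ≠ 0 → t ≤ j ∧ j < t + (M : ℤ)) (f : ℤ → ℂ) (j : ℤ) :
    ∑ n ∈ Finset.Icc (-(|j| + |t| + (M : ℤ))) (|j| + |t| + (M : ℤ)), ∑ m : Fin M,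
        (∑' j' : ℤ, f j' * (starRingEnd ℂ) (eF M (m : ℕ) j' * φ (j' - n * (N : ℤ)))) *
          (eF M (m : ℕ) j * φ (j - n * (N : ℤ)))
      = (M : ℂ) * f j * ((∑' n : ℤ, ‖φ (j - n * (N : ℤ))‖ ^ 2 : ℝ) : ℂ) := by
  have hinner : ∀ n : ℤ,
      (∑ m : Fin M, (∑' j' : ℤ, f j' * (starRingEnd ℂ) (eF M (m : ℕ) j' * φ (j' - n * (N : ℤ)))) *
          (eF M (m : ℕ) j * φ (j - n * (N : ℤ))))
        = (M : ℂ) * f j * ((‖φ (j - n * (N : ℤ))‖ ^ 2 : ℝ) : ℂ) := by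
    intro n
    by_cases hjT : j ∈ Finset.Ico (t + n * (N : ℤ)) (t + n * (N : ℤ) + (M : ℤ))
    · have hrw : ∀ m : Fin M,
          (∑' j' : ℤ, f j' * (starRingEnd ℂ) (eF M (m : ℕ) j' * φ (j' - n * (N : ℤ)))) *
            (eF M (m : ℕ) j * φ (j - n * (N : ℤ)))
          = φ (j - n * (N : ℤ)) *
            ((∑ j' ∈ Finset.Ico (t + n * (N : ℤ)) (t + n * (N : ℤ) + (M : ℤ)),
              (f j' * (starRingEnd ℂ) (φ (j' - n * (N : ℤ)))) * (starRingEnd ℂ) (eF M (m : ℕ) j')) *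
              eF M (m : ℕ) j) := by
        intro m
        rw [dot_expand M N φ t hφ]
        ring
      simp only [hrw]
      rw [← Finset.mul_sum]
      have hkey := key M hM (t + n * (N : ℤ))
        (fun j' => f j' * (starRingEnd ℂ) (φ (j' - n * (N : ℤ)))) j hjT
      rw [hkey]
      have := norm_sq_complex (φ (j - n * (N : ℤ)))
      push_cast
      rw [this]
      ring
    · rw [window_vanish M N φ t hφ n j hjT]
      simp
  rw [Finset.sum_congr rfl (fun n _ => hinner n)]
  have htsum : (∑' n : ℤ, ‖φ (j - n * (N : ℤ))‖ ^ 2 : ℝ)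
      = ∑ n ∈ Finset.Icc (-(|j| + |t| + (M : ℤ))) (|j| + |t| + (M : ℤ)), ‖φ (j - n * (N : ℤ))‖ ^ 2 := by
    apply tsum_eq_sum
    intro n hn
    rw [nsupport M N φ t hN hφ j n hn]
    simp
  rw [htsum]
  push_cast
  rw [Finset.mul_sum]

end Window

end Stmt4Aux

open scoped ENNReal NNReal

theorem stmt4 (L M N : ℕ) (hL : 0 < L) (hM : 0 < M) (hN : 0 < N)
    (S : Set ℤ) (hS : IsPeriodicSet N S)
    (g : ℕ → ℤ → ℂ) (hg : ∀ l, MemL2S S (g l))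
    (hsupp : ∀ l, ∃ a : ℤ, ∀ j : ℤ, g l j ≠ 0 → a ≤ j ∧ j < a + (M : ℤ))
    (A B : ℝ) (hA : 0 < A) (hAB : A ≤ B) :
    (IsFrameOn S (gaborFam L M N g) A B ↔
      ∀ j ∈ S ∩ Set.Ico (0 : ℤ) (N : ℤ),
        A ≤ (M : ℝ) * ∑ l ∈ Finset.range L, ∑' n : ℤ, ‖g l (j - n * (N : ℤ))‖ ^ 2 ∧
        (M : ℝ) * ∑ l ∈ Finset.range L, ∑' n : ℤ, ‖g l (j - n * (N : ℤ))‖ ^ 2 ≤ B) ∧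
    (IsFrameOn S (gaborFam L M N g) A B →
      ∀ f : ℤ → ℂ, MemL2S S f → ∀ j : ℤ,
        (∑' i : Fin L × ℤ × Fin M, dotP f (gaborFam L M N g i) * gaborFam L M N g i j) =
          (((M : ℝ) * ∑ l ∈ Finset.range L, ∑' n : ℤ, ‖g l (j - n * (N : ℤ))‖ ^ 2 : ℝ) : ℂ) * f j) := by
  classical
  obtain ⟨hSne, hSper⟩ := hS
  choose a ha using hsupp
  set w : ℤ → ℝ := fun j => (M : ℝ) * ∑ l ∈ Finset.range L, ∑' n : ℤ, ‖g l (j - n * (N : ℤ))‖ ^ 2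
    with hw
  have hwnn : ∀ j, 0 ≤ w j := fun j => mul_nonneg (Nat.cast_nonneg M)
    (Finset.sum_nonneg fun l _ => tsum_nonneg fun n => sq_nonneg _)
  have hdot : ∀ (f : ℤ → ℂ) (i : Fin L × ℤ × Fin M),
      dotP f (gaborFam L M N g i)
        = ∑' j : ℤ, f j * (starRingEnd ℂ)
            (Stmt4Aux.eF M ((i.2.2 : ℕ)) j * g (i.1 : ℕ) (j - i.2.1 * (N : ℤ))) :=
    fun f i => rfl
  have hfam : ∀ (i : Fin L × ℤ × Fin M) (j : ℤ),
      gaborFam L M N g i j = Stmt4Aux.eF M ((i.2.2 : ℕ)) j * g (i.1 : ℕ) (j - i.2.1 * (N : ℤ)) :=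
    fun i j => rfl
  have hW : ∀ j : ℤ,
      (∑ l ∈ Finset.range L, ((M : ℝ≥0∞) * ∑' n : ℤ, (‖g l (j - n * (N : ℤ))‖₊ : ℝ≥0∞) ^ 2))
        = ENNReal.ofReal (w j) := by
    intro j
    rw [hw]
    rw [ENNReal.ofReal_mul (Nat.cast_nonneg M), ENNReal.ofReal_natCast,
      ENNReal.ofReal_sum_of_nonneg (fun l _ => tsum_nonneg fun n => sq_nonneg _), Finset.mul_sum]
    refine Finset.sum_congr rfl fun l _ => ?_
    rw [Stmt4Aux.tsum_n_ofReal M N (g l) (a l) hN (ha l) j]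
  have E1 : ∀ f : ℤ → ℂ,
      (∑' i : Fin L × ℤ × Fin M, (‖dotP f (gaborFam L M N g i)‖₊ : ℝ≥0∞) ^ 2)
        = ∑' j : ℤ, (‖f j‖₊ : ℝ≥0∞) ^ 2 * ENNReal.ofReal (w j) := by
    intro f
    simp only [hdot]
    rw [ENNReal.tsum_prod', tsum_fintype]
    have hl : ∀ l : Fin L,
        (∑' p : ℤ × Fin M, (‖∑' j : ℤ, f j * (starRingEnd ℂ)
            (Stmt4Aux.eF M ((p.2 : ℕ)) j * g (l : ℕ) (j - p.1 * (N : ℤ)))‖₊ : ℝ≥0∞) ^ 2)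
          = ∑' j : ℤ, (‖f j‖₊ : ℝ≥0∞) ^ 2 *
              ((M : ℝ≥0∞) * ∑' n : ℤ, (‖g (l : ℕ) (j - n * (N : ℤ))‖₊ : ℝ≥0∞) ^ 2) :=
      fun l => Stmt4Aux.enn_window M N (g l) (a l) hM hN (ha l) f
    rw [Finset.sum_congr rfl (fun l _ => hl l)]
    rw [← Summable.tsum_finsetSum (fun l _ => ENNReal.summable)]
    refine tsum_congr fun j => ?_
    rw [← Finset.mul_sum]
    rw [Fin.sum_univ_eq_sum_range
      (fun l => (M : ℝ≥0∞) * ∑' n : ℤ, (‖g l (j - n * (N : ℤ))‖₊ : ℝ≥0∞) ^ 2) L]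
    rw [hW j]
  have hreal1 : ∀ f : ℤ → ℂ,
      (∑' i : Fin L × ℤ × Fin M, ‖dotP f (gaborFam L M N g i)‖ ^ 2)
        = (∑' i : Fin L × ℤ × Fin M, (‖dotP f (gaborFam L M N g i)‖₊ : ℝ≥0∞) ^ 2).toReal :=
    fun f => Stmt4Aux.tsum_sq_toReal _
  have hnsq_nonneg : ∀ f : ℤ → ℂ, 0 ≤ normSq2 f :=
    fun f => tsum_nonneg fun j => sq_nonneg _
  have hreal2 : ∀ f : ℤ → ℂ, MemL2S S f →
      (∑' j : ℤ, (‖f j‖₊ : ℝ≥0∞) ^ 2) = ENNReal.ofReal (normSq2 f) := by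
    intro f hf
    have hsum : Summable (fun j : ℤ => ‖f j‖ ^ 2) := by
      have hs := (memℓp_gen_iff (p := (2 : ℝ≥0∞)) (by norm_num)).mp hf.1
      have heq : (fun j : ℤ => ‖f j‖ ^ 2) = fun j : ℤ => ‖f j‖ ^ ((2 : ℝ≥0∞)).toReal := by
        funext j
        rw [ENNReal.toReal_ofNat, ← Real.rpow_natCast ‖f j‖ 2]
        norm_num
      rw [heq]
      exact hs
    rw [normSq2, ENNReal.ofReal_tsum_of_nonneg (fun j => sq_nonneg _) hsum]
    exact tsum_congr fun j => Stmt4Aux.enn_sq _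
  have hwper : ∀ j : ℤ, w (j % (N : ℤ)) = w j := by
    intro j
    have hj : j = j % (N : ℤ) + (j / (N : ℤ)) * (N : ℤ) := by
      have h := Int.emod_add_mul_ediv j (N : ℤ)
      linear_combination -h
    conv_rhs => rw [hj]
    rw [hw]
    simp only
    congr 1
    refine Finset.sum_congr rfl fun l _ => ?_
    exact (Stmt4Aux.periodic N (g l) (j % (N : ℤ)) (j / (N : ℤ))).symm
  refine ⟨⟨fun hframe => ?_, fun hyp => ?_⟩, fun _ => ?_⟩
  · -- frame → bounds
    intro j hj
    obtain ⟨hjS, hjI⟩ := hj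
    set δ : ℤ → ℂ := fun i => if i = j then 1 else 0 with hδdef
    have hδ0 : ∀ i : ℤ, i ∉ ({j} : Finset ℤ) → δ i = 0 := by
      intro i hi
      rw [hδdef]
      simp only [Finset.mem_singleton] at hi
      simp [hi]
    have hδ : MemL2S S δ := by
      constructor
      · apply memℓp_gen
        apply summable_of_ne_finset_zero (s := ({j} : Finset ℤ))
        intro i hi
        rw [hδ0 i hi, norm_zero]
        rw [Real.zero_rpow (by norm_num)]
      · intro i hiS
        rw [hδdef]
        simp only
        rw [if_neg]
        intro h
        exact hiS (h ▸ hjS)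
    have hnδ : normSq2 δ = 1 := by
      rw [normSq2, tsum_eq_sum (s := ({j} : Finset ℤ))
        (fun i hi => by rw [hδ0 i hi]; simp)]
      rw [Finset.sum_singleton, hδdef]
      simp
    obtain ⟨h1, h2⟩ := hframe δ hδ
    rw [hreal1 δ, E1 δ, hnδ] at h1 h2
    have hts : (∑' j' : ℤ, (‖δ j'‖₊ : ℝ≥0∞) ^ 2 * ENNReal.ofReal (w j'))
        = ENNReal.ofReal (w j) := by
      rw [tsum_eq_sum (s := ({j} : Finset ℤ))
        (fun i hi => by rw [hδ0 i hi]; simp)]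
      rw [Finset.sum_singleton, hδdef]
      simp
    rw [hts, ENNReal.toReal_ofReal (hwnn j)] at h1 h2
    rw [mul_one] at h1 h2
    exact ⟨h1, h2⟩
  · -- bounds → frame
    have hSmem : ∀ j ∈ S, A ≤ w j ∧ w j ≤ B := by
      intro j hj
      have hmem : j % (N : ℤ) ∈ S := by
        have h2 := hSper j hj (-(j / (N : ℤ)))
        have heq : j + (-(j / (N : ℤ))) * (N : ℤ) = j % (N : ℤ) := by
          have h := Int.emod_add_mul_ediv j (N : ℤ)
          linear_combination -h
        rwa [heq] at h2
      have hIco : j % (N : ℤ) ∈ Set.Ico (0 : ℤ) (N : ℤ) :=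
        ⟨Int.emod_nonneg j (by exact_mod_cast hN.ne'), Int.emod_lt_of_pos j (by exact_mod_cast hN)⟩
      have hb := hyp (j % (N : ℤ)) ⟨hmem, hIco⟩
      have hb1 : A ≤ w (j % (N : ℤ)) := hb.1
      have hb2 : w (j % (N : ℤ)) ≤ B := hb.2
      rw [hwper j] at hb1 hb2
      exact ⟨hb1, hb2⟩
    intro f hf
    have hFf := hreal2 f hf
    have hup : (∑' i : Fin L × ℤ × Fin M, (‖dotP f (gaborFam L M N g i)‖₊ : ℝ≥0∞) ^ 2)
        ≤ ENNReal.ofReal B * ENNReal.ofReal (normSq2 f) := by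
      rw [E1 f]
      calc (∑' j : ℤ, (‖f j‖₊ : ℝ≥0∞) ^ 2 * ENNReal.ofReal (w j))
          ≤ ∑' j : ℤ, (‖f j‖₊ : ℝ≥0∞) ^ 2 * ENNReal.ofReal B := by
            refine Summable.tsum_le_tsum (fun j => ?_) ENNReal.summable ENNReal.summable
            by_cases hfj : f j = 0
            · simp [hfj]
            · have hjS : j ∈ S := by
                by_contra hc
                exact hfj (hf.2 j hc)
              exact mul_le_mul_right (ENNReal.ofReal_le_ofReal (hSmem j hjS).2) _
        _ = ENNReal.ofReal B * ENNReal.ofReal (normSq2 f) := by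
            rw [ENNReal.tsum_mul_right, hFf, mul_comm]
    have hlo : ENNReal.ofReal A * ENNReal.ofReal (normSq2 f)
        ≤ (∑' i : Fin L × ℤ × Fin M, (‖dotP f (gaborFam L M N g i)‖₊ : ℝ≥0∞) ^ 2) := by
      rw [E1 f]
      calc ENNReal.ofReal A * ENNReal.ofReal (normSq2 f)
          = ∑' j : ℤ, (‖f j‖₊ : ℝ≥0∞) ^ 2 * ENNReal.ofReal A := by
            rw [ENNReal.tsum_mul_right, hFf, mul_comm]
        _ ≤ ∑' j : ℤ, (‖f j‖₊ : ℝ≥0∞) ^ 2 * ENNReal.ofReal (w j) := by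
            refine Summable.tsum_le_tsum (fun j => ?_) ENNReal.summable ENNReal.summable
            by_cases hfj : f j = 0
            · simp [hfj]
            · have hjS : j ∈ S := by
                by_contra hc
                exact hfj (hf.2 j hc)
              exact mul_le_mul_right (ENNReal.ofReal_le_ofReal (hSmem j hjS).1) _
    have hfin2 : (∑' i : Fin L × ℤ × Fin M, (‖dotP f (gaborFam L M N g i)‖₊ : ℝ≥0∞) ^ 2) ≠ ⊤ :=
      ne_top_of_le_ne_top (ENNReal.mul_ne_top ENNReal.ofReal_ne_top ENNReal.ofReal_ne_top) hup
    constructor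
    · rw [hreal1 f]
      have h := ENNReal.toReal_mono hfin2 hlo
      rwa [ENNReal.toReal_mul, ENNReal.toReal_ofReal hA.le,
        ENNReal.toReal_ofReal (hnsq_nonneg f)] at h
    · rw [hreal1 f]
      have h := ENNReal.toReal_mono
        (ENNReal.mul_ne_top ENNReal.ofReal_ne_top ENNReal.ofReal_ne_top) hup
      rwa [ENNReal.toReal_mul, ENNReal.toReal_ofReal (hA.le.trans hAB),
        ENNReal.toReal_ofReal (hnsq_nonneg f)] at h
  · -- frame operator
    intro f hf j
    set K : ℤ := |j| + (∑ l ∈ Finset.range L, |a l|) + M with hK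
    have haK : ∀ l : Fin L, |j| + |a (l : ℕ)| + (M : ℤ) ≤ K := by
      intro l
      rw [hK]
      have h := Finset.single_le_sum (f := fun l' => |a l'|)
        (fun l' _ => abs_nonneg _) (Finset.mem_range.mpr l.isLt)
      linarith
    have hvan : ∀ i ∉ ((Finset.univ : Finset (Fin L)) ×ˢ
        (Finset.Icc (-K) K ×ˢ (Finset.univ : Finset (Fin M)))),
        dotP f (gaborFam L M N g i) * gaborFam L M N g i j = 0 := by
      rintro ⟨l, n, m⟩ hi
      have hn : n ∉ Finset.Icc (-K) K := by
        simp only [Finset.mem_product, Finset.mem_univ, true_and, and_true] at hi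
        exact hi
      have hz : g (l : ℕ) (j - n * (N : ℤ)) = 0 := by
        apply Stmt4Aux.nsupport M N (g l) (a l) hN (ha l) j n
        intro hmem
        apply hn
        rw [Finset.mem_Icc] at hmem ⊢
        have := haK l
        omega
      rw [hfam, hz, mul_zero, mul_zero]
    rw [tsum_eq_sum hvan, Finset.sum_product]
    have hper_l : ∀ l : Fin L,
        (∑ p ∈ Finset.Icc (-K) K ×ˢ (Finset.univ : Finset (Fin M)),
          dotP f (gaborFam L M N g (l, p)) * gaborFam L M N g (l, p) j)
          = (M : ℂ) * f j * ((∑' n : ℤ, ‖g (l : ℕ) (j - n * (N : ℤ))‖ ^ 2 : ℝ) : ℂ) := by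
      intro l
      rw [Finset.sum_product]
      have hsub : Finset.Icc (-(|j| + |a (l : ℕ)| + (M : ℤ))) (|j| + |a (l : ℕ)| + (M : ℤ))
          ⊆ Finset.Icc (-K) K := by
        intro x hx
        rw [Finset.mem_Icc] at hx ⊢
        have := haK l
        omega
      rw [← Finset.sum_subset hsub]
      · simp only [hdot, hfam]
        exact Stmt4Aux.operator_window M N (g l) (a l) hM hN (ha l) f j
      · intro n hnK hnl
        have hz : g (l : ℕ) (j - n * (N : ℤ)) = 0 :=
          Stmt4Aux.nsupport M N (g l) (a l) hN (ha l) j n hnl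
        refine Finset.sum_eq_zero fun m _ => ?_
        rw [hfam, hz, mul_zero, mul_zero]
    rw [Finset.sum_congr rfl (fun l _ => hper_l l)]
    rw [Fin.sum_univ_eq_sum_range
      (fun l => (M : ℂ) * f j * ((∑' n : ℤ, ‖g l (j - n * (N : ℤ))‖ ^ 2 : ℝ) : ℂ)) L]
    push_cast
    rw [Finset.mul_sum, Finset.sum_mul]
    exact Finset.sum_congr rfl fun l _ => by ring
end

section
/- If the multiwindow Gabor system G(g,L,M,N) is a frame for ℓ²(S), then card(S ∩ {0,...,N−1}) ≤ LM. -/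
open Complex MeasureTheory

noncomputable section

set_option maxHeartbeats 1000000 in
private lemma counting {ι κ : Type*} [Fintype ι] (v : κ → EuclideanSpace ℂ ι) (A R : ℝ)
    (hA : 0 < A) (near : Finset κ)
    (h1 : ∀ f : EuclideanSpace ℂ ι,
        A * ‖f‖ ^ 2 ≤ ∑' i, ‖(inner ℂ (v i) f : ℂ)‖ ^ 2)
    (h2 : ∀ Fs : Finset κ, (∀ i ∈ Fs, i ∉ near) → ∑ i ∈ Fs, ‖v i‖ ^ 2 ≤ R) :
    A * (Fintype.card ι) ≤ A * near.card + R := by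
  classical
  let Φ : EuclideanSpace ℂ ι →ₗ[ℂ] (↥near → ℂ) :=
    LinearMap.pi (fun i : ↥near => ((innerSL ℂ (v i.1)) : EuclideanSpace ℂ ι →ₗ[ℂ] ℂ))
  let U : Submodule ℂ (EuclideanSpace ℂ ι) := LinearMap.ker Φ
  let d : ℕ := Module.finrank ℂ U
  have hcard : Fintype.card ι ≤ near.card + d := by
    have h₁ := LinearMap.finrank_range_add_finrank_ker Φ
    have h₂ : Module.finrank ℂ (LinearMap.range Φ) ≤ Fintype.card ↥near := by
      have := Submodule.finrank_le (LinearMap.range Φ)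
      simpa [Module.finrank_pi] using this
    have h₃ : Module.finrank ℂ (EuclideanSpace ℂ ι) = Fintype.card ι := finrank_euclideanSpace
    rw [h₃] at h₁
    simp only [Fintype.card_coe] at h₂
    have hdd : d = Module.finrank ℂ (LinearMap.ker Φ) := rfl
    omega
  let B := stdOrthonormalBasis ℂ U
  let e : Fin d → EuclideanSpace ℂ ι := fun s => (B s : EuclideanSpace ℂ ι)
  have horth : Orthonormal ℂ e := by
    rw [orthonormal_iff_ite]
    intro i j
    have h := B.orthonormal
    rw [orthonormal_iff_ite] at h
    have h' := h i j
    rwa [Submodule.coe_inner] at h'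
  have hnorm1 : ∀ s, ‖e s‖ = 1 := horth.1
  have hker : ∀ s, ∀ i ∈ near, (inner ℂ (v i) (e s) : ℂ) = 0 := by
    intro s i hi
    have hm : (B s : EuclideanSpace ℂ ι) ∈ U := (B s).2
    have hm' : Φ (B s : EuclideanSpace ℂ ι) = 0 := hm
    have := congrFun hm' ⟨i, hi⟩
    simpa [Φ] using this
  have hsummable : ∀ s, Summable (fun i : κ => ‖(inner ℂ (v i) (e s) : ℂ)‖ ^ 2) := by
    intro s
    by_contra hns
    have h := h1 (e s)
    rw [tsum_eq_zero_of_not_summable hns, hnorm1 s] at h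
    nlinarith
  have hstep : ∀ s, A ≤ ∑' i : {i : κ | i ∉ near}, ‖(inner ℂ (v (i : κ)) (e s) : ℂ)‖ ^ 2 := by
    intro s
    have h := h1 (e s)
    rw [hnorm1 s] at h
    have hsupp : Function.support (fun i : κ => ‖(inner ℂ (v i) (e s) : ℂ)‖ ^ 2)
        ⊆ {i : κ | i ∉ near} := by
      intro i hi
      simp only [Function.mem_support] at hi
      intro hmem
      exact hi (by rw [hker s i hmem]; simp)
    rw [tsum_subtype_eq_of_support_subset hsupp]
    linarith
  have hmain : A * d ≤ R := by
    have hsum1 : A * d ≤ ∑ s : Fin d, ∑' i : {i : κ | i ∉ near},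
        ‖(inner ℂ (v (i : κ)) (e s) : ℂ)‖ ^ 2 := by
      calc A * d = ∑ _s : Fin d, A := by simp [mul_comm]
      _ ≤ _ := Finset.sum_le_sum fun s _ => hstep s
    have hswap : ∑ s : Fin d, ∑' i : {i : κ | i ∉ near}, ‖(inner ℂ (v (i : κ)) (e s) : ℂ)‖ ^ 2
        = ∑' i : {i : κ | i ∉ near}, ∑ s : Fin d, ‖(inner ℂ (v (i : κ)) (e s) : ℂ)‖ ^ 2 := by
      rw [Summable.tsum_finsetSum]
      intro s _
      exact ((hsummable s).subtype _)
    have hbess : ∀ i : {i : κ | i ∉ near},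
        ∑ s : Fin d, ‖(inner ℂ (v (i : κ)) (e s) : ℂ)‖ ^ 2 ≤ ‖v (i : κ)‖ ^ 2 := by
      intro i
      have hb := horth.sum_inner_products_le (s := Finset.univ) (v (i : κ))
      calc ∑ s : Fin d, ‖(inner ℂ (v (i : κ)) (e s) : ℂ)‖ ^ 2
          = ∑ s : Fin d, ‖(inner ℂ (e s) (v (i : κ)) : ℂ)‖ ^ 2 := by
            refine Finset.sum_congr rfl fun s _ => ?_
            rw [norm_inner_symm]
        _ ≤ ‖v (i : κ)‖ ^ 2 := hb
    have hR0 : 0 ≤ R := by simpa using h2 ∅ (by simp)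
    have hfinal : ∑' i : {i : κ | i ∉ near}, ∑ s : Fin d,
        ‖(inner ℂ (v (i : κ)) (e s) : ℂ)‖ ^ 2 ≤ R := by
      refine tsum_le_of_sum_le' hR0 ?_
      intro Fs
      calc ∑ i ∈ Fs, ∑ s : Fin d, ‖(inner ℂ (v (i : κ)) (e s) : ℂ)‖ ^ 2
          ≤ ∑ i ∈ Fs, ‖v (i : κ)‖ ^ 2 := Finset.sum_le_sum fun i _ => hbess i
        _ = ∑ i ∈ Fs.image Subtype.val, ‖v i‖ ^ 2 := by
            rw [Finset.sum_image]
            intro x _ y _ h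
            exact Subtype.val_injective h
        _ ≤ R := h2 _ (by
            intro i hi
            simp only [Finset.mem_image] at hi
            obtain ⟨j, _, rfl⟩ := hi
            exact j.2)
    rw [hswap] at hsum1
    linarith
  have hfin : A * (Fintype.card ι : ℝ) ≤ A * near.card + A * d := by
    have hc := (Nat.cast_le (α := ℝ)).2 hcard
    push_cast at hc ⊢
    nlinarith
  linarith

private lemma tail_choice (G : ℤ → ℝ) (hG : Summable G) (hG0 : ∀ x, 0 ≤ G x)
    (ε : ℝ) (hε : 0 < ε) (N : ℕ) (hN : 0 < N) :
    ∃ W : ℕ, 1 ≤ W ∧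
      (∑' x : ℤ, if x < -((W : ℤ) * N) ∨ ((W : ℤ) * N) ≤ x then G x else 0) ≤ ε := by
  classical
  have htend := hG.hasSum
  have hev : ∀ᶠ F in Filter.atTop, ∑' x, G x - ε < ∑ x ∈ F, G x :=
    htend (Ioi_mem_nhds (by linarith))
  obtain ⟨F₀, hF₀⟩ := Filter.eventually_atTop.1 hev
  set W : ℕ := F₀.sup (fun x => x.natAbs) + 1 with hW
  refine ⟨W, le_add_self.trans_eq rfl, ?_⟩
  set F : Finset ℤ := Finset.Ico (-((W : ℤ) * N)) ((W : ℤ) * N) with hF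
  have hsub : F₀ ⊆ F := by
    intro x hx
    have h1 : x.natAbs ≤ F₀.sup (fun x => x.natAbs) := Finset.le_sup hx
    have h0 : x.natAbs < W := by rw [hW]; omega
    have h4 : x ≤ (x.natAbs : ℤ) := Int.le_natAbs
    have h5 : -(x.natAbs : ℤ) ≤ x := by
      rw [neg_le]; exact (Int.le_natAbs (a := -x)).trans_eq (by simp)
    have h2 : ((x.natAbs : ℤ)) < (W : ℤ) := by exact_mod_cast h0
    have h3 : (W : ℤ) ≤ (W : ℤ) * N := by
      nlinarith [Int.natCast_nonneg W, (by exact_mod_cast hN : (0:ℤ) < N)]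
    simp only [hF, Finset.mem_Ico]
    omega
  have hbig := hF₀ F hsub
  have heq : (∑' x : ℤ, if x < -((W : ℤ) * N) ∨ ((W : ℤ) * N) ≤ x then G x else 0)
      = ∑' x : ℤ, G x - ∑ x ∈ F, G x := by
    have h1 : (fun x : ℤ => if x < -((W : ℤ) * N) ∨ ((W : ℤ) * N) ≤ x then G x else 0)
        = Set.indicator {x : ℤ | x ∉ F} G := by
      funext x
      rw [Set.indicator_apply]
      have hiff : (x < -((W : ℤ) * N) ∨ ((W : ℤ) * N) ≤ x) ↔ x ∈ {x : ℤ | x ∉ F} := by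
        simp only [Set.mem_setOf_eq, hF, Finset.mem_Ico]
        omega
      by_cases hc : x < -((W : ℤ) * N) ∨ ((W : ℤ) * N) ≤ x
      · rw [if_pos hc, if_pos (hiff.1 hc)]
      · rw [if_neg hc, if_neg (fun hm => hc (hiff.2 hm))]
    rw [h1, ← tsum_subtype]
    have h2 := Summable.sum_add_tsum_compl (s := F) hG
    have h3 : ∑' (x : {x : ℤ | x ∉ F}), G (x : ℤ) = ∑' (x : ↑((F : Set ℤ))ᶜ), G (x : ℤ) := rfl
    linarith [h2, h3]
  rw [heq]
  linarith

open scoped Classical in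
private lemma card_period (N T : ℕ) (hN : 0 < N) (S : Set ℤ)
    (hS : ∀ j ∈ S, ∀ n : ℤ, j + n * (N : ℤ) ∈ S) :
    ((Finset.Ico (0:ℤ) ((T:ℤ) * N)).filter (· ∈ S)).card
      = T * ((Finset.Ico (0:ℤ) (N:ℤ)).filter (· ∈ S)).card := by
  have hNZ : (N : ℤ) ≠ 0 := by exact_mod_cast hN.ne'
  have hNpos : (0:ℤ) < N := by exact_mod_cast hN
  have key : ((Finset.Ico (0:ℤ) ((T:ℤ) * N)).filter (· ∈ S)).card
      = ((Finset.range T) ×ˢ ((Finset.Ico (0:ℤ) (N:ℤ)).filter (· ∈ S))).card := by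
    apply Finset.card_bij' (i := fun (j : ℤ) _ => (((j / (N:ℤ)).toNat : ℕ), j % (N:ℤ)))
      (j := fun (p : ℕ × ℤ) _ => p.2 + (p.1 : ℤ) * N)
    · intro j hj
      simp only [Finset.mem_filter, Finset.mem_Ico] at hj
      obtain ⟨⟨hj0, hjT⟩, hjS⟩ := hj
      have hdiv0 : 0 ≤ j / (N:ℤ) := Int.ediv_nonneg hj0 hNpos.le
      have hdivT : j / (N:ℤ) < T := by
        rw [Int.ediv_lt_iff_lt_mul hNpos]
        linarith [hjT]
      simp only [Finset.mem_product, Finset.mem_range, Finset.mem_filter, Finset.mem_Ico]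
      refine ⟨?_, ⟨Int.emod_nonneg j hNZ, Int.emod_lt_of_pos j hNpos⟩, ?_⟩
      · omega
      · have hh : j % (N:ℤ) = j + (-(j / (N:ℤ))) * N := by
          rw [Int.emod_def]; ring
        rw [hh]
        exact hS j hjS _
    · intro p hp
      simp only [Finset.mem_product, Finset.mem_range, Finset.mem_filter, Finset.mem_Ico] at hp
      obtain ⟨hpT, ⟨hr0, hrN⟩, hrS⟩ := hp
      simp only [Finset.mem_filter, Finset.mem_Ico]
      have h1 : (p.1 : ℤ) + 1 ≤ T := by exact_mod_cast hpT
      refine ⟨⟨by positivity, ?_⟩, hS p.2 hrS p.1⟩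
      have hlt : p.2 + (p.1 : ℤ) * N < ((p.1 : ℤ) + 1) * N := by nlinarith
      nlinarith
    · intro j hj
      simp only [Finset.mem_filter, Finset.mem_Ico] at hj
      have hdiv0 : 0 ≤ j / (N:ℤ) := Int.ediv_nonneg hj.1.1 hNpos.le
      rw [Int.toNat_of_nonneg hdiv0]
      rw [Int.emod_def]; ring
    · intro p hp
      simp only [Finset.mem_product, Finset.mem_range, Finset.mem_filter, Finset.mem_Ico] at hp
      obtain ⟨hpT, ⟨hr0, hrN⟩, hrS⟩ := hp
      have hdiv : (p.2 + (p.1 : ℤ) * N) / N = p.1 := by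
        rw [Int.add_mul_ediv_right _ _ hNZ, Int.ediv_eq_zero_of_lt hr0 hrN, zero_add]
      have hmod : (p.2 + (p.1 : ℤ) * N) % N = p.2 := by
        rw [Int.add_mul_emod_self_right, Int.emod_eq_of_lt hr0 hrN]
      ext
      · simp [hdiv]
      · simp [hmod]
  rw [key, Finset.card_product, Finset.card_range]

end

set_option maxHeartbeats 4000000 in
theorem stmt5 (L M N : ℕ) (hL : 0 < L) (hM : 0 < M) (hN : 0 < N)
    (S : Set ℤ) (hS : IsPeriodicSet N S)
    (g : ℕ → ℤ → ℂ) (hg : ∀ l, MemL2S S (g l))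
    (hframe : ∃ A B : ℝ, 0 < A ∧ A ≤ B ∧ IsFrameOn S (gaborFam L M N g) A B) :
    (S ∩ Set.Ico (0 : ℤ) (N : ℤ)).ncard ≤ L * M := by
  classical
  by_contra hKK
  push_neg at hKK
  obtain ⟨A, Bb, hA, hAB, hFr⟩ := hframe
  set Sm : Finset ℤ := (Finset.Ico (0:ℤ) (N:ℤ)).filter (· ∈ S) with hSm
  have hset : S ∩ Set.Ico (0:ℤ) (N:ℤ) = ↑Sm := by
    ext x
    simp only [hSm, Finset.coe_filter, Finset.mem_Ico, Set.mem_inter_iff, Set.mem_Ico,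
      Set.mem_setOf_eq]
    tauto
  rw [hset, Set.ncard_coe_finset] at hKK
  set K := Sm.card with hKdef
  -- square-summability of the windows
  have hgsq : ∀ l : ℕ, Summable (fun x : ℤ => ‖g l x‖ ^ 2) := by
    intro l
    have h := (hg l).1.summable (by norm_num)
    have h2 : ((2:ENNReal)).toReal = ((2:ℕ) : ℝ) := by norm_num
    rw [h2] at h
    simpa [Real.rpow_natCast] using h
  set G : ℤ → ℝ := fun x => ∑ l : Fin L, ‖g (l:ℕ) x‖ ^ 2 with hGdef
  have hGsum : Summable G := by
    apply summable_sum
    intro l _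
    exact hgsq l
  have hG0 : ∀ x, 0 ≤ G x := by
    intro x
    exact Finset.sum_nonneg fun l _ => by positivity
  have hε : 0 < A / (2 * M) := by positivity
  obtain ⟨W, hW1, htail⟩ := tail_choice G hGsum hG0 (A / (2 * M)) hε N hN
  set T : ℕ := 4 * L * M * W + 1 with hTdef
  set Big : Finset ℤ := (Finset.Ico (0:ℤ) ((T:ℤ) * N)).filter (· ∈ S) with hBigdef
  have hBigCard : Big.card = T * K := card_period N T hN S hS.2
  set F := gaborFam L M N g with hFdef
  set v : (Fin L × ℤ × Fin M) → EuclideanSpace ℂ ↥Big :=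
    fun i => (WithLp.equiv 2 _).symm (fun j : ↥Big => F i (j : ℤ)) with hvdef
  have hv : ∀ i j, v i j = F i (j : ℤ) := fun i j => rfl
  set near : Finset (Fin L × ℤ × Fin M) :=
    Finset.univ ×ˢ ((Finset.Icc (-(W:ℤ)) ((T:ℤ) + W - 1)) ×ˢ Finset.univ) with hneardef
  have hnearmem : ∀ i : Fin L × ℤ × Fin M,
      i ∈ near ↔ (-(W:ℤ) ≤ i.2.1 ∧ i.2.1 ≤ (T:ℤ) + W - 1) := by
    intro i
    simp [hneardef, Finset.mem_product, Finset.mem_Icc]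
  have hNpos : (0:ℤ) < N := by exact_mod_cast hN
  have hNZ : (N:ℤ) ≠ 0 := hNpos.ne'
  -- h1 : frame inequality transferred to the finite-dimensional space
  have h1 : ∀ f : EuclideanSpace ℂ ↥Big,
      A * ‖f‖ ^ 2 ≤ ∑' i, ‖(inner ℂ (v i) f : ℂ)‖ ^ 2 := by
    intro f
    set fext : ℤ → ℂ := fun x => if h : x ∈ Big then f ⟨x, h⟩ else 0 with hfext
    have hoff : ∀ x ∉ Big, fext x = 0 := by
      intro x hx; simp [hfext, dif_neg hx]
    have hmem : MemL2S S fext := by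
      constructor
      · apply memℓp_gen
        apply summable_of_ne_finset_zero (s := Big)
        intro b hb
        rw [hoff b hb]
        simp only [norm_zero]
        rw [Real.zero_rpow]
        norm_num
      · intro x hx
        apply hoff
        simp only [hBigdef, Finset.mem_filter]
        tauto
    have hdot : ∀ i, dotP fext (F i) = (inner ℂ (v i) f : ℂ) := by
      intro i
      rw [dotP]
      rw [tsum_eq_sum (s := Big) (fun b hb => by rw [hoff b hb, zero_mul])]
      rw [← Finset.sum_coe_sort]
      rw [PiLp.inner_apply]
      refine Finset.sum_congr rfl fun j _ => ?_
      have hj : fext (j : ℤ) = f j := by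
        simp [hfext, dif_pos j.2]
      rw [hj, RCLike.inner_apply, hv]
    have hnrm : normSq2 fext = ‖f‖ ^ 2 := by
      rw [normSq2]
      rw [tsum_eq_sum (s := Big) (fun b hb => by rw [hoff b hb]; simp)]
      rw [← Finset.sum_coe_sort]
      rw [EuclideanSpace.norm_eq, Real.sq_sqrt (Finset.sum_nonneg fun j _ => by positivity)]
      refine Finset.sum_congr rfl fun j _ => ?_
      have hj : fext (j : ℤ) = f j := by simp [hfext, dif_pos j.2]
      rw [hj]
    have hlow := (hFr fext hmem).1
    rw [hnrm] at hlow
    calc A * ‖f‖ ^ 2 ≤ ∑' i, ‖dotP fext (F i)‖ ^ 2 := hlow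
    _ = ∑' i, ‖(inner ℂ (v i) f : ℂ)‖ ^ 2 := tsum_congr fun i => by rw [hdot]
  -- the tail function
  set w : ((Fin L × Fin M × Fin T) × ℤ) → ℝ := fun p =>
    if p.2 < -((W:ℤ) * N) ∨ ((W:ℤ) * N) ≤ p.2 then ‖g (p.1.1 : ℕ) p.2‖ ^ 2 else 0 with hwdef
  have hw0 : ∀ p, 0 ≤ w p := by
    intro p
    rw [hwdef]
    dsimp only
    split <;> positivity
  have hslice : ∀ a : Fin L × Fin M × Fin T, Summable (fun x : ℤ => w (a, x)) := by
    intro a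
    apply Summable.of_nonneg_of_le (fun x => hw0 (a, x)) _ (hgsq a.1)
    intro x
    rw [hwdef]
    dsimp only
    split
    · exact le_refl _
    · positivity
  have hwsum : Summable w := by
    apply (summable_prod_of_nonneg hw0).2
    exact ⟨hslice, Summable.of_finite⟩
  have hwtsum : ∑' p, w p ≤ (M:ℝ) * T * (A / (2 * M)) := by
    have e1 : ∑' p, w p = ∑ a : Fin L × Fin M × Fin T, ∑' x : ℤ, w (a, x) := by
      rw [Summable.tsum_prod' hwsum hslice, tsum_fintype]
    have e3 : ∑ a : Fin L × Fin M × Fin T, ∑' x : ℤ, w (a, x)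
        = ((M:ℝ) * T) * ∑ l : Fin L,
            ∑' x : ℤ, (if x < -((W:ℤ) * N) ∨ ((W:ℤ) * N) ≤ x then ‖g (l : ℕ) x‖ ^ 2 else 0) := by
      rw [Fintype.sum_prod_type]
      rw [Finset.mul_sum]
      refine Finset.sum_congr rfl fun l _ => ?_
      have einner : ∀ b : Fin M × Fin T, ∑' x : ℤ, w ((l, b), x)
          = ∑' x : ℤ, (if x < -((W:ℤ) * N) ∨ ((W:ℤ) * N) ≤ x then ‖g (l : ℕ) x‖ ^ 2 else 0) :=
        fun b => rfl
      rw [Finset.sum_congr rfl fun b _ => einner b, Finset.sum_const]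
      simp only [Finset.card_univ, Fintype.card_prod, Fintype.card_fin, nsmul_eq_mul]
      push_cast
      ring
    have e4 : ∑ l : Fin L,
        ∑' x : ℤ, (if x < -((W:ℤ) * N) ∨ ((W:ℤ) * N) ≤ x then ‖g (l : ℕ) x‖ ^ 2 else 0)
        = ∑' x : ℤ, (if x < -((W:ℤ) * N) ∨ ((W:ℤ) * N) ≤ x then G x else 0) := by
      rw [← Summable.tsum_finsetSum (fun l _ => by
        apply Summable.of_nonneg_of_le (fun x => by positivity) _ (hgsq l)
        intro x
        split
        · exact le_refl _
        · positivity)]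
      refine tsum_congr fun x => ?_
      by_cases hc : x < -((W:ℤ) * N) ∨ ((W:ℤ) * N) ≤ x
      · simp only [if_pos hc, hGdef]
      · simp only [if_neg hc, Finset.sum_const_zero]
    rw [e1, e3, e4]
    have hMT0 : (0:ℝ) ≤ (M:ℝ) * T := by positivity
    calc ((M:ℝ) * T) * ∑' x : ℤ, (if x < -((W:ℤ) * N) ∨ ((W:ℤ) * N) ≤ x then G x else 0)
        ≤ ((M:ℝ) * T) * (A / (2 * M)) := by
          exact mul_le_mul_of_nonneg_left htail hMT0
      _ = (M:ℝ) * T * (A / (2 * M)) := by ring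
  -- h2 : tail estimate on far coefficients
  have h2 : ∀ Fs : Finset (Fin L × ℤ × Fin M), (∀ i ∈ Fs, i ∉ near) →
      ∑ i ∈ Fs, ‖v i‖ ^ 2 ≤ (M:ℝ) * T * (A / (2 * M)) := by
    intro Fs hFs
    have hvnormsq : ∀ i : Fin L × ℤ × Fin M,
        ‖v i‖ ^ 2 = ∑ j : ↥Big, ‖g (i.1 : ℕ) ((j:ℤ) - i.2.1 * N)‖ ^ 2 := by
      intro i
      rw [EuclideanSpace.norm_eq, Real.sq_sqrt (Finset.sum_nonneg fun j _ => by positivity)]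
      refine Finset.sum_congr rfl fun j _ => ?_
      rw [hv]
      rw [hFdef]
      show ‖Complex.exp _ * g _ _‖ ^ 2 = _
      rw [norm_mul]
      have harg : 2 * (Real.pi : ℂ) * Complex.I * ((i.2.2 : ℕ) : ℂ) * (((j:ℤ) : ℤ) : ℂ) / (M : ℂ)
          = ((2 * Real.pi * ((i.2.2 : ℕ) : ℝ) * (((j:ℤ) : ℤ) : ℝ) / M : ℝ) : ℂ) * Complex.I := by
        push_cast
        ring
      rw [harg, Complex.norm_exp_ofReal_mul_I, one_mul]
    have hBigmem : ∀ j : ↥Big, 0 ≤ (j:ℤ) ∧ (j:ℤ) < (T:ℤ) * N := by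
      intro j
      have hj := j.2
      simp only [hBigdef, Finset.mem_filter, Finset.mem_Ico] at hj
      exact hj.1
    have hqlt : ∀ j : ↥Big, ((j:ℤ) / (N:ℤ)).toNat < T := by
      intro j
      obtain ⟨hj0, hjT⟩ := hBigmem j
      have h0 : 0 ≤ (j:ℤ) / N := Int.ediv_nonneg hj0 hNpos.le
      have h1' : (j:ℤ) / N < T := by
        rw [Int.ediv_lt_iff_lt_mul hNpos]
        linarith
      omega
    set q : ↥Big → Fin T := fun j => ⟨((j:ℤ) / (N:ℤ)).toNat, hqlt j⟩ with hqdef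
    set Ψ : (Fin L × ℤ × Fin M) × ↥Big → (Fin L × Fin M × Fin T) × ℤ :=
      fun p => ((p.1.1, p.1.2.2, q p.2), (p.2 : ℤ) - p.1.2.1 * N) with hΨdef
    have hcond : ∀ p : (Fin L × ℤ × Fin M) × ↥Big, p.1 ∉ near →
        ((p.2:ℤ) - p.1.2.1 * N < -((W:ℤ) * N) ∨ ((W:ℤ) * N) ≤ (p.2:ℤ) - p.1.2.1 * N) := by
      intro p hp
      rw [hnearmem] at hp
      push_neg at hp
      obtain ⟨hj0, hjT⟩ := hBigmem p.2
      by_cases hcase : -(W:ℤ) ≤ p.1.2.1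
      · have hn : (T:ℤ) + W - 1 < p.1.2.1 := hp hcase
        have hn' : (T:ℤ) + W ≤ p.1.2.1 := by omega
        left
        have hmul : ((T:ℤ) + W) * N ≤ p.1.2.1 * N := mul_le_mul_of_nonneg_right hn' hNpos.le
        nlinarith
      · push_neg at hcase
        right
        have hn' : p.1.2.1 ≤ -(W:ℤ) - 1 := by omega
        have hmul : p.1.2.1 * N ≤ (-(W:ℤ) - 1) * N := mul_le_mul_of_nonneg_right hn' hNpos.le
        nlinarith
    have hval : ∀ p ∈ Fs ×ˢ (Finset.univ : Finset ↥Big),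
        ‖g (p.1.1 : ℕ) ((p.2:ℤ) - p.1.2.1 * N)‖ ^ 2 = w (Ψ p) := by
      intro p hp
      simp only [Finset.mem_product] at hp
      have hc := hcond p (hFs _ hp.1)
      rw [hwdef, hΨdef]
      dsimp only
      rw [if_pos hc]
    have hinj : ∀ p ∈ Fs ×ˢ (Finset.univ : Finset ↥Big),
        ∀ p' ∈ Fs ×ˢ (Finset.univ : Finset ↥Big), Ψ p = Ψ p' → p = p' := by
      intro p _ p' _ heq
      obtain ⟨⟨l, n, m⟩, j⟩ := p
      obtain ⟨⟨l', n', m'⟩, j'⟩ := p'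
      simp only [hΨdef, Prod.mk.injEq] at heq
      obtain ⟨⟨hl, hm, hq⟩, hx⟩ := heq
      have hj0 := (hBigmem j).1
      have hj0' := (hBigmem j').1
      have hd0 : 0 ≤ (j:ℤ) / N := Int.ediv_nonneg hj0 hNpos.le
      have hd0' : 0 ≤ (j':ℤ) / N := Int.ediv_nonneg hj0' hNpos.le
      have hqv : ((j:ℤ) / (N:ℤ)).toNat = ((j':ℤ) / (N:ℤ)).toNat := by
        have := congrArg Fin.val hq
        simpa [hqdef] using this
      have hdiv : (j:ℤ) / N = (j':ℤ) / N := by omega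
      have hmod : (j:ℤ) % N = (j':ℤ) % N := by
        have e1 : (j:ℤ) = ((j:ℤ) - n * N) + n * N := by ring
        have e2 : (j':ℤ) = ((j':ℤ) - n' * N) + n' * N := by ring
        rw [e1, e2, Int.add_mul_emod_self_right, Int.add_mul_emod_self_right, hx]
      have hjj : (j:ℤ) = (j':ℤ) := by
        calc (j:ℤ) = (N:ℤ) * ((j:ℤ) / N) + (j:ℤ) % N := (Int.mul_ediv_add_emod _ _).symm
          _ = (N:ℤ) * ((j':ℤ) / N) + (j':ℤ) % N := by rw [hdiv, hmod]
          _ = (j':ℤ) := Int.mul_ediv_add_emod _ _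
      have hnn : n = n' := by
        have h5 : n * (N:ℤ) = n' * N := by linarith [hx, hjj]
        exact mul_right_cancel₀ hNZ h5
      subst hl
      subst hm
      subst hnn
      rw [Subtype.ext hjj]
    calc ∑ i ∈ Fs, ‖v i‖ ^ 2
        = ∑ i ∈ Fs, ∑ j : ↥Big, ‖g (i.1 : ℕ) ((j:ℤ) - i.2.1 * N)‖ ^ 2 :=
          Finset.sum_congr rfl fun i _ => hvnormsq i
      _ = ∑ p ∈ Fs ×ˢ (Finset.univ : Finset ↥Big),
            ‖g (p.1.1 : ℕ) ((p.2:ℤ) - p.1.2.1 * N)‖ ^ 2 := by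
          rw [Finset.sum_product]
      _ = ∑ p ∈ Fs ×ˢ (Finset.univ : Finset ↥Big), w (Ψ p) := Finset.sum_congr rfl hval
      _ = ∑ p' ∈ (Fs ×ˢ (Finset.univ : Finset ↥Big)).image Ψ, w p' :=
          (Finset.sum_image hinj).symm
      _ ≤ ∑' p', w p' := Summable.sum_le_tsum _ (fun p _ => hw0 p) hwsum
      _ ≤ (M:ℝ) * T * (A / (2 * M)) := hwtsum
  -- apply the counting lemma
  have hcount := counting v A ((M:ℝ) * T * (A / (2 * M))) hA near h1 h2
  have hcard1 : Fintype.card ↥Big = T * K := by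
    rw [Fintype.card_coe, hBigCard]
  have hcard2 : near.card = L * ((T + 2 * W) * M) := by
    rw [hneardef, Finset.card_product, Finset.card_product]
    have hIcc : (Finset.Icc (-(W:ℤ)) ((T:ℤ) + W - 1)).card = T + 2 * W := by
      rw [Int.card_Icc]
      omega
    rw [hIcc]
    simp [Finset.card_univ]
  rw [hcard1, hcard2] at hcount
  -- final arithmetic contradiction
  have hKge : (L:ℝ) * M + 1 ≤ (K:ℝ) := by
    have : L * M + 1 ≤ K := hKK
    exact_mod_cast this
  have hT0 : (0:ℝ) < (T:ℝ) := by positivity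
  have hATc : A * (T:ℝ) = 4 * A * L * M * W + A := by
    have hTc : (T:ℝ) = 4 * L * M * W + 1 := by
      rw [hTdef]
      push_cast
      ring
    rw [hTc]
    ring
  have hMT : (M:ℝ) * T * (A / (2 * M)) = (T:ℝ) * A / 2 := by
    have hM0 : (M:ℝ) ≠ 0 := by positivity
    field_simp
  rw [hMT] at hcount
  push_cast at hcount
  have hprod : A * ((T:ℝ) * ((L:ℝ) * M + 1)) ≤ A * ((T:ℝ) * K) := by
    have h7 : (0:ℝ) ≤ A * T := by positivity
    nlinarith
  nlinarith [hcount, hprod, hATc, hA]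
end

section
/- The multiwindow Gabor system G(g,L,M,N) is a Parseval frame for ℓ²(S) if and only if (a) for all j ∈ S ∩ {0,...,N−1}, ∑_{l=0}^{L-1} ∑_{n∈ℤ} |g_l(j−nN)|² = 1/M, and (b) for all j ∈ S ∩ {0,...,N−1} and all k ∈ ℤ∖{0}, ∑_{l=0}^{L-1} ∑_{n∈ℤ} g_l(j−nN)·conj(g_l(j+kM−nN)) = 0. -/
open Complex MeasureTheory

noncomputable section


lemma memℓp_two_iff {ι : Type*} (f : ι → ℂ) : Memℓp f 2 ↔ Summable (fun j => ‖f j‖^2) := by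
  constructor
  · intro h
    have := h.summable (p := 2) (by norm_num)
    convert this using 2 with j
    have h2 : (2 : ENNReal).toReal = ((2:ℕ):ℝ) := by norm_num
    rw [h2, Real.rpow_natCast]
  · intro h
    apply memℓp_gen
    convert h using 2 with j
    have h2 : (2 : ENNReal).toReal = ((2:ℕ):ℝ) := by norm_num
    rw [h2, Real.rpow_natCast]

lemma summable_mul_conj {a b : ℤ → ℂ} (ha : Memℓp a 2) (hb : Memℓp b 2) :
    Summable (fun j => a j * (starRingEnd ℂ) (b j)) := by
  have ha' := (memℓp_two_iff a).1 ha
  have hb' := (memℓp_two_iff b).1 hb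
  apply Summable.of_norm_bounded ((ha'.add hb').div_const 2)
  intro j
  simp only [norm_mul, RingHomIsometric.norm_map]
  nlinarith [sq_nonneg (‖a j‖ - ‖b j‖), norm_nonneg (a j), norm_nonneg (b j)]

end
noncomputable section
open Finset

lemma memℓp_shift {b : ℤ → ℂ} (hb : Memℓp b 2) (t : ℤ) : Memℓp (fun x => b (x + t)) 2 := by
  rw [memℓp_two_iff] at hb ⊢
  exact ((Equiv.addRight t).summable_iff (f := fun j => ‖b j‖^2)).2 hb

lemma summable_corr {a b : ℤ → ℂ} (ha : Memℓp a 2) (hb : Memℓp b 2) {N : ℕ} (hN : 0 < N)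
    (u v : ℤ) :
    Summable (fun n : ℤ => a (u - n * N) * (starRingEnd ℂ) (b (v - n * N))) := by
  have h1 : Summable (fun x : ℤ => a x * (starRingEnd ℂ) (b (x + (v - u)))) :=
    summable_mul_conj ha (memℓp_shift hb _)
  have hinj : Function.Injective (fun n : ℤ => u - n * N) := by
    intro n n' h
    simp only [sub_right_inj] at h
    have hN' : (N : ℤ) ≠ 0 := by exact_mod_cast hN.ne'
    exact mul_right_cancel₀ hN' h
  have := h1.comp_injective hinj
  convert this using 2 with n
  · rfl
  simp only [Function.comp_apply]
  ring_nf

lemma sum_exp_eq (M : ℕ) (hM : 0 < M) (d : ℤ) :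
    ∑ m ∈ Finset.range M, Complex.exp (2 * (Real.pi:ℂ) * I * d * m / M) =
      if (M:ℤ) ∣ d then (M:ℂ) else 0 := by
  have hM' : (M:ℂ) ≠ 0 := by exact_mod_cast hM.ne'
  have hterm : ∀ m : ℕ, Complex.exp (2 * (Real.pi:ℂ) * I * d * m / M)
      = Complex.exp (2 * (Real.pi:ℂ) * I * d / M) ^ m := by
    intro m
    rw [← Complex.exp_nat_mul]
    ring_nf
  simp only [hterm]
  by_cases hdvd : (M:ℤ) ∣ d
  · obtain ⟨c, rfl⟩ := hdvd
    have : Complex.exp (2 * (Real.pi:ℂ) * I * ((M:ℤ)*c : ℤ) / M) = 1 := by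
      push_cast
      rw [show 2 * (Real.pi:ℂ) * I * ((M:ℂ)*c) / M = c * (2 * Real.pi * I) by
        field_simp]
      exact Complex.exp_int_mul_two_pi_mul_I c
    push_cast at this
    simp [this, hM]
  · rw [if_neg hdvd]
    have hr1 : Complex.exp (2 * (Real.pi:ℂ) * I * d / M) ≠ 1 := by
      intro h
      rw [Complex.exp_eq_one_iff] at h
      obtain ⟨n, hn⟩ := h
      apply hdvd
      refine ⟨n, ?_⟩
      rw [mul_comm]
      have h2 : (2 * (Real.pi:ℂ) * I) ≠ 0 := by
        simp [Real.pi_ne_zero, Complex.I_ne_zero]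
      have : (d : ℂ) = n * M := by
        field_simp at hn
        have : (d:ℂ) * (2 * Real.pi * I) = n * M * (2 * Real.pi * I) := by
          linear_combination (2 * Real.pi * I) * hn
        exact mul_right_cancel₀ h2 this
      exact_mod_cast this
    rw [geom_sum_eq hr1]
    have : Complex.exp (2 * (Real.pi:ℂ) * I * d / M) ^ M = 1 := by
      rw [← Complex.exp_nat_mul]
      rw [show (M:ℂ) * (2 * (Real.pi:ℂ) * I * d / M) = d * (2 * Real.pi * I) by
        field_simp]
      exact Complex.exp_int_mul_two_pi_mul_I d
    simp [this]

end
noncomputable section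
open Finset



lemma normsq_c (z : ℂ) : ((‖z‖^2 : ℝ) : ℂ) = z * (starRingEnd ℂ) z := by
  rw [Complex.mul_conj]
  norm_cast
  rw [Complex.normSq_eq_norm_sq]

lemma dotP_gabor (L M N : ℕ) (g : ℕ → ℤ → ℂ) (f : ℤ → ℂ) (T : Finset ℤ)
    (hf : ∀ j ∉ T, f j = 0) (l : Fin L) (n : ℤ) (m : Fin M) :
    dotP f (gaborFam L M N g (l, n, m)) =
      ∑ j ∈ T, (f j * (starRingEnd ℂ) (g l (j - n * (N:ℤ)))) *
        Complex.exp (-(2 * (Real.pi:ℂ) * Complex.I * ((m:ℕ):ℂ) * (j:ℂ) / (M:ℂ))) := by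
  rw [dotP, tsum_eq_sum (s := T) (f := fun j => f j * (starRingEnd ℂ) (gaborFam L M N g (l,n,m) j))
    (by intro j hj; simp [hf j hj])]
  refine Finset.sum_congr rfl (fun j hj => ?_)
  simp only [gaborFam]
  rw [map_mul, ← Complex.exp_conj]
  rw [show (starRingEnd ℂ) (2 * (Real.pi:ℂ) * Complex.I * ((m:ℕ):ℂ) * (j:ℂ) / (M:ℂ))
      = -(2 * (Real.pi:ℂ) * Complex.I * ((m:ℕ):ℂ) * (j:ℂ) / (M:ℂ)) by
    simp only [map_div₀, map_mul, Complex.conj_I, Complex.conj_ofReal, map_ofNat,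
      map_natCast, map_intCast]
    ring]
  ring

end
noncomputable section
open Finset

lemma sum_m (L M N : ℕ) (hM : 0 < M) (g : ℕ → ℤ → ℂ) (f : ℤ → ℂ) (T : Finset ℤ)
    (hf : ∀ j ∉ T, f j = 0) (l : Fin L) (n : ℤ) :
    ∑ m : Fin M, ((‖dotP f (gaborFam L M N g (l, n, m))‖^2 : ℝ) : ℂ) =
      ∑ j ∈ T, ∑ j' ∈ T, (if (M:ℤ) ∣ (j' - j) then
        (M:ℂ) * (f j * (starRingEnd ℂ) (f j') *
          ((starRingEnd ℂ) (g l (j - n * (N:ℤ))) * g l (j' - n * (N:ℤ)))) else 0) := by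
  have key : ∀ m : Fin M, ((‖dotP f (gaborFam L M N g (l, n, m))‖^2 : ℝ) : ℂ) =
      ∑ j ∈ T, ∑ j' ∈ T,
        (f j * (starRingEnd ℂ) (f j') *
          ((starRingEnd ℂ) (g l (j - n * (N:ℤ))) * g l (j' - n * (N:ℤ)))) *
          Complex.exp (2 * (Real.pi:ℂ) * I * ((j' - j : ℤ):ℂ) * ((m:ℕ):ℂ) / (M:ℂ)) := by
    intro m
    rw [normsq_c, dotP_gabor L M N g f T hf l n m, map_sum, Finset.sum_mul_sum]
    refine Finset.sum_congr rfl fun j hj => Finset.sum_congr rfl fun j' hj' => ?_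
    rw [map_mul, map_mul, Complex.conj_conj, ← Complex.exp_conj]
    rw [show (starRingEnd ℂ) (-(2 * (Real.pi:ℂ) * I * ((m:ℕ):ℂ) * (j':ℂ) / (M:ℂ)))
        = 2 * (Real.pi:ℂ) * I * ((m:ℕ):ℂ) * (j':ℂ) / (M:ℂ) by
      simp only [map_neg, map_div₀, map_mul, Complex.conj_I, Complex.conj_ofReal, map_ofNat,
        map_natCast, map_intCast]
      ring]
    calc (f j * (starRingEnd ℂ) (g l (j - n * (N:ℤ))) *
            Complex.exp (-(2 * (Real.pi:ℂ) * I * ((m:ℕ):ℂ) * (j:ℂ) / (M:ℂ)))) *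
          ((starRingEnd ℂ) (f j') * g l (j' - n * (N:ℤ)) *
            Complex.exp (2 * (Real.pi:ℂ) * I * ((m:ℕ):ℂ) * (j':ℂ) / (M:ℂ)))
        = (f j * (starRingEnd ℂ) (f j') *
            ((starRingEnd ℂ) (g l (j - n * (N:ℤ))) * g l (j' - n * (N:ℤ)))) *
          (Complex.exp (-(2 * (Real.pi:ℂ) * I * ((m:ℕ):ℂ) * (j:ℂ) / (M:ℂ))) *
           Complex.exp (2 * (Real.pi:ℂ) * I * ((m:ℕ):ℂ) * (j':ℂ) / (M:ℂ))) := by ring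
      _ = _ := by
          rw [← Complex.exp_add]
          congr 2
          push_cast
          ring
  rw [Finset.sum_congr rfl (fun m _ => key m)]
  rw [Finset.sum_comm]
  refine Finset.sum_congr rfl fun j hj => ?_
  rw [Finset.sum_comm]
  refine Finset.sum_congr rfl fun j' hj' => ?_
  rw [← Finset.mul_sum, Fin.sum_univ_eq_sum_range
    (fun m => Complex.exp (2 * (Real.pi:ℂ) * I * ((j' - j : ℤ):ℂ) * ((m:ℕ):ℂ) / (M:ℂ))) M]
  rw [sum_exp_eq M hM (j' - j)]
  rw [mul_ite, mul_zero, mul_comm]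

end
noncomputable section
open Finset

lemma hasSum_corr {gl : ℤ → ℂ} (hgl : Memℓp gl 2) {M N : ℕ} (hN : 0 < N)
    (j k : ℤ) :
    HasSum (fun n : ℤ => (starRingEnd ℂ) (gl (j - n * (N:ℤ))) * gl (j + k * (M:ℤ) - n * (N:ℤ)))
      ((starRingEnd ℂ) (matEntry M N gl gl j k)) := by
  have hs := summable_corr hgl hgl hN j (j + k * (M:ℤ))
  have h1 : HasSum (fun n : ℤ => gl (j - n * (N:ℤ)) *
      (starRingEnd ℂ) (gl (j + k * (M:ℤ) - n * (N:ℤ)))) (matEntry M N gl gl j k) := hs.hasSum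
  have h2 := h1.star
  have heq : (fun n : ℤ => (starRingEnd ℂ) (gl (j - n * (N:ℤ))) * gl (j + k * (M:ℤ) - n * (N:ℤ)))
      = fun n : ℤ => star (gl (j - n * (N:ℤ)) * (starRingEnd ℂ) (gl (j + k * (M:ℤ) - n * (N:ℤ)))) := by
    funext n
    simp only [star_mul, RCLike.star_def, Complex.conj_conj]
    rw [mul_comm]
  rw [heq]
  exact h2

lemma hasSum_n (M N : ℕ) (hM : 0 < M) (hN : 0 < N) {gl : ℤ → ℂ} (hgl : Memℓp gl 2)
    (f : ℤ → ℂ) (T : Finset ℤ) :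
    HasSum (fun n : ℤ => ∑ j ∈ T, ∑ j' ∈ T, (if (M:ℤ) ∣ (j' - j) then
        (M:ℂ) * (f j * (starRingEnd ℂ) (f j') *
          ((starRingEnd ℂ) (gl (j - n * (N:ℤ))) * gl (j' - n * (N:ℤ)))) else 0))
      (∑ j ∈ T, ∑ j' ∈ T, (if (M:ℤ) ∣ (j' - j) then
        (M:ℂ) * (f j * (starRingEnd ℂ) (f j') *
          (starRingEnd ℂ) (matEntry M N gl gl j ((j' - j) / M))) else 0)) := by
  refine hasSum_sum fun j hj => hasSum_sum fun j' hj' => ?_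
  by_cases hdvd : (M:ℤ) ∣ (j' - j)
  · simp only [if_pos hdvd]
    have hjj : j + (j' - j) / (M:ℤ) * (M:ℤ) = j' := by
      rw [Int.ediv_mul_cancel hdvd]; ring
    have := (hasSum_corr hgl hN (M := M) j ((j' - j) / M)).mul_left ((M:ℂ) * (f j * (starRingEnd ℂ) (f j')))
    rw [hjj] at this
    convert this using 1
    · rfl
    · funext n; ring
    · ring
  · simp only [if_neg hdvd]
    exact hasSum_zero

end
noncomputable section
open Finset

lemma core (L M N : ℕ) (hM : 0 < M) (hN : 0 < N) (g : ℕ → ℤ → ℂ)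
    (hg : ∀ l, Memℓp (g l) 2) (f : ℤ → ℂ) (T : Finset ℤ) (hf : ∀ j ∉ T, f j = 0) :
    Summable (fun i : Fin L × ℤ × Fin M => ‖dotP f (gaborFam L M N g i)‖^2) ∧
    ((∑' i : Fin L × ℤ × Fin M, ‖dotP f (gaborFam L M N g i)‖^2 : ℝ) : ℂ) =
      (M:ℂ) * ∑ j ∈ T, ∑ j' ∈ T, (if (M:ℤ) ∣ (j' - j) then
        f j * (starRingEnd ℂ) (f j') *
          (starRingEnd ℂ) (∑ l ∈ Finset.range L, matEntry M N (g l) (g l) j ((j' - j) / M))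
        else 0) := by
  set φ : Fin L × ℤ × Fin M → ℝ := fun i => ‖dotP f (gaborFam L M N g i)‖^2 with hφ
  have hnn : 0 ≤ φ := fun i => by positivity
  -- the complex value of the n-sum for each window l
  set V : Fin L → ℂ := fun l => ∑ j ∈ T, ∑ j' ∈ T, (if (M:ℤ) ∣ (j' - j) then
      (M:ℂ) * (f j * (starRingEnd ℂ) (f j') *
        (starRingEnd ℂ) (matEntry M N (g l) (g l) j ((j' - j) / M))) else 0) with hV
  have hcplx : ∀ l : Fin L, HasSum (fun n : ℤ => ((∑ m : Fin M, φ (l, n, m) : ℝ) : ℂ)) (V l) := by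
    intro l
    have h1 := hasSum_n M N hM hN (hg l) f T
    have h2 : (fun n : ℤ => ((∑ m : Fin M, φ (l, n, m) : ℝ) : ℂ))
        = fun n : ℤ => ∑ j ∈ T, ∑ j' ∈ T, (if (M:ℤ) ∣ (j' - j) then
            (M:ℂ) * (f j * (starRingEnd ℂ) (f j') *
              ((starRingEnd ℂ) (g l (j - n * (N:ℤ))) * g l (j' - n * (N:ℤ)))) else 0) := by
      funext n
      rw [Complex.ofReal_sum]
      exact sum_m L M N hM g f T hf l n
    rw [h2]
    exact h1
  have hres : ∀ l : Fin L, Summable (fun n : ℤ => ∑ m : Fin M, φ (l, n, m)) := by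
    intro l
    have := (hcplx l).summable
    rwa [Complex.summable_ofReal] at this
  have hval : ∀ l : Fin L, ((∑' n : ℤ, ∑ m : Fin M, φ (l, n, m) : ℝ) : ℂ) = V l := by
    intro l
    have h1 : HasSum (fun n : ℤ => ((∑ m : Fin M, φ (l, n, m) : ℝ) : ℂ))
        ((∑' n : ℤ, ∑ m : Fin M, φ (l, n, m) : ℝ) : ℂ) := by
      rw [Complex.hasSum_ofReal]
      exact (hres l).hasSum
    exact h1.unique (hcplx l)
  -- summability over the product index
  have hsub : ∀ l : Fin L, Summable (fun q : ℤ × Fin M => φ (l, q)) := by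
    intro l
    rw [summable_prod_of_nonneg (fun q => hnn (l, q))]
    constructor
    · intro n; exact (hasSum_fintype _).summable
    · convert hres l using 1
      funext n
      exact tsum_fintype _
  have hsum : Summable φ := by
    rw [summable_prod_of_nonneg hnn]
    exact ⟨hsub, (hasSum_fintype _).summable⟩
  refine ⟨hsum, ?_⟩
  have hdecomp : (∑' i, φ i) = ∑ l : Fin L, ∑' n : ℤ, ∑ m : Fin M, φ (l, n, m) := by
    rw [hsum.tsum_prod' hsub, tsum_fintype]
    refine Finset.sum_congr rfl fun l _ => ?_
    rw [(hsub l).tsum_prod' (fun n => (hasSum_fintype _).summable)]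
    exact tsum_congr fun n => tsum_fintype _
  rw [hdecomp, Complex.ofReal_sum]
  have : ∑ l : Fin L, ((∑' n : ℤ, ∑ m : Fin M, φ (l, n, m) : ℝ) : ℂ) = ∑ l : Fin L, V l :=
    Finset.sum_congr rfl fun l _ => hval l
  rw [this, hV]
  rw [Finset.sum_comm]
  rw [Finset.mul_sum]
  refine Finset.sum_congr rfl fun j _ => ?_
  rw [Finset.sum_comm]
  rw [Finset.mul_sum]
  refine Finset.sum_congr rfl fun j' _ => ?_
  by_cases hdvd : (M:ℤ) ∣ (j' - j)
  · simp only [if_pos hdvd]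
    rw [← Fin.sum_univ_eq_sum_range (fun l => matEntry M N (g l) (g l) j ((j' - j) / M)) L]
    rw [map_sum, Finset.mul_sum, Finset.mul_sum]
  · simp only [if_neg hdvd, Finset.sum_const_zero, mul_zero]

end
noncomputable section
open Finset

/-- lp-version bridge lemmas -/
lemma lp_norm_sq {ι : Type*} {f : ι → ℂ} (hf : Memℓp f 2) :
    ‖(⟨f, hf⟩ : lp (fun _ : ι => ℂ) 2)‖ ^ 2 = ∑' j, ‖f j‖^2 := by
  have h := lp.norm_rpow_eq_tsum (p := 2) (E := fun _ : ι => ℂ) (by norm_num)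
    (⟨f, hf⟩ : lp (fun _ : ι => ℂ) 2)
  have h2 : (2 : ENNReal).toReal = ((2:ℕ):ℝ) := by norm_num
  rw [h2] at h
  simp_rw [Real.rpow_natCast] at h
  exact_mod_cast h

lemma dotP_eq_inner {f h : ℤ → ℂ} (hf : Memℓp f 2) (hh : Memℓp h 2) :
    dotP f h = inner (𝕜 := ℂ) (⟨h, hh⟩ : lp (fun _ : ℤ => ℂ) 2) (⟨f, hf⟩ : lp (fun _ : ℤ => ℂ) 2) := by
  rw [lp.inner_eq_tsum, dotP]
  exact tsum_congr fun j => by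
    simp only [RCLike.inner_apply]


/-- truncation -/
def trunc (R : ℕ) (f : ℤ → ℂ) : ℤ → ℂ :=
  fun j => if j ∈ Finset.Icc (-(R:ℤ)) (R:ℤ) then f j else 0

lemma trunc_memℓp (R : ℕ) (f : ℤ → ℂ) : Memℓp (trunc R f) 2 := by
  rw [memℓp_two_iff]
  apply summable_of_ne_finset_zero (s := Finset.Icc (-(R:ℤ)) (R:ℤ))
  intro j hj
  simp [trunc, hj]

lemma trunc_normSq_le {f : ℤ → ℂ} (hf : Memℓp f 2) (R : ℕ) :
    normSq2 (trunc R f) ≤ normSq2 f := by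
  rw [normSq2, normSq2]
  refine ((memℓp_two_iff _).1 (trunc_memℓp R f)).tsum_le_tsum (fun j => ?_) ((memℓp_two_iff _).1 hf)
  by_cases hj : j ∈ Finset.Icc (-(R:ℤ)) (R:ℤ) <;> simp [trunc, hj]

lemma tendsto_sum_Icc {s : ℤ → ℝ} (hs : Summable s) :
    Filter.Tendsto (fun R : ℕ => ∑ j ∈ Finset.Icc (-(R:ℤ)) (R:ℤ), s j) Filter.atTop
      (nhds (∑' j, s j)) := by
  have h1 : Filter.Tendsto (fun R : ℕ => Finset.Icc (-(R:ℤ)) (R:ℤ)) Filter.atTop Filter.atTop := by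
    apply Filter.tendsto_atTop_finset_of_monotone
    · intro a b hab
      apply Finset.Icc_subset_Icc <;> omega
    · intro x
      exact ⟨x.natAbs, by simp only [Finset.mem_Icc]; omega⟩
  exact hs.hasSum.comp h1

lemma trunc_sub_normSq_tendsto {f : ℤ → ℂ} (hf : Memℓp f 2) :
    Filter.Tendsto (fun R : ℕ => normSq2 (fun j => f j - trunc R f j)) Filter.atTop (nhds 0) := by
  have hs := (memℓp_two_iff _).1 hf
  have heq : ∀ R : ℕ, normSq2 (fun j => f j - trunc R f j)
      = normSq2 f - ∑ j ∈ Finset.Icc (-(R:ℤ)) (R:ℤ), ‖f j‖^2 := by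
    intro R
    have hsplit := hs.sum_add_tsum_compl (s := Finset.Icc (-(R:ℤ)) (R:ℤ))
    rw [normSq2, normSq2]
    have : ∀ j : ℤ, ‖f j - trunc R f j‖^2
        = Set.indicator (↑(Finset.Icc (-(R:ℤ)) (R:ℤ)) : Set ℤ)ᶜ (fun j => ‖f j‖^2) j := by
      intro j
      by_cases hj : j ∈ Finset.Icc (-(R:ℤ)) (R:ℤ)
      · rw [Set.indicator_of_notMem (by simpa using hj)]
        simp [trunc, hj]
      · rw [Set.indicator_of_mem (by simpa using hj)]
        simp [trunc, hj]
    rw [tsum_congr this, ← _root_.tsum_subtype]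
    have := hsplit
    linarith [this]
  simp only [heq]
  have h2 := (tendsto_sum_Icc hs).const_sub (normSq2 f)
  have h0 : normSq2 f - ∑' j, ‖f j‖^2 = 0 := by rw [normSq2]; ring
  rw [h0] at h2
  exact h2

end
noncomputable section
open Finset Filter

lemma parseval_extend {ι : Type*} (S : Set ℤ) (F : ι → ℤ → ℂ) (hF : ∀ i, Memℓp (F i) 2)
    (hfin : ∀ f : ℤ → ℂ, (∃ T : Finset ℤ, ∀ j ∉ T, f j = 0) → (∀ j ∉ S, f j = 0) →
      Summable (fun i => ‖dotP f (F i)‖^2) ∧ (∑' i, ‖dotP f (F i)‖^2) = normSq2 f)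
    (f : ℤ → ℂ) (hf2 : Memℓp f 2) (hfS : ∀ j ∉ S, f j = 0) :
    Summable (fun i => ‖dotP f (F i)‖^2) ∧ (∑' i, ‖dotP f (F i)‖^2) = normSq2 f := by
  -- basic facts about truncations
  have htrS : ∀ (h : ℤ → ℂ), (∀ j ∉ S, h j = 0) → ∀ (R : ℕ), ∀ j ∉ S, trunc R h j = 0 := by
    intro h hh R j hj
    simp [trunc, hh j hj]
  have htrT : ∀ (h : ℤ → ℂ) (R : ℕ), ∃ T : Finset ℤ, ∀ j ∉ T, trunc R h j = 0 := by
    intro h R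
    exact ⟨Finset.Icc (-(R:ℤ)) (R:ℤ), fun j hj => by simp [trunc, hj]⟩
  have hsubmem : ∀ (h : ℤ → ℂ), Memℓp h 2 → ∀ R : ℕ, Memℓp (fun j => h j - trunc R h j) 2 := by
    intro h hh R
    exact hh.sub (trunc_memℓp R h)
  -- convergence of truncations in lp
  have hlim : ∀ (h : ℤ → ℂ) (hh2 : Memℓp h 2),
      Tendsto (fun R : ℕ => (⟨trunc R h, trunc_memℓp R h⟩ : lp (fun _ : ℤ => ℂ) 2)) atTop
        (nhds (⟨h, hh2⟩ : lp (fun _ : ℤ => ℂ) 2)) := by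
    intro h hh2
    rw [tendsto_iff_norm_sub_tendsto_zero]
    have hnorm : ∀ R : ℕ, ‖(⟨trunc R h, trunc_memℓp R h⟩ : lp (fun _ : ℤ => ℂ) 2)
        - (⟨h, hh2⟩ : lp (fun _ : ℤ => ℂ) 2)‖
        = Real.sqrt (normSq2 (fun j => h j - trunc R h j)) := by
      intro R
      have hD : Memℓp (fun j => h j - trunc R h j) 2 := hsubmem h hh2 R
      have heq : (⟨trunc R h, trunc_memℓp R h⟩ : lp (fun _ : ℤ => ℂ) 2)
          - (⟨h, hh2⟩ : lp (fun _ : ℤ => ℂ) 2) = -(⟨fun j => h j - trunc R h j, hD⟩ :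
            lp (fun _ : ℤ => ℂ) 2) := by
        apply lp.ext
        rw [lp.coeFn_sub, lp.coeFn_neg]
        funext j
        simp only [Pi.sub_apply, Pi.neg_apply]
        ring
      rw [heq, norm_neg]
      rw [show ‖(⟨fun j => h j - trunc R h j, hD⟩ : lp (fun _ : ℤ => ℂ) 2)‖
          = Real.sqrt (‖(⟨fun j => h j - trunc R h j, hD⟩ : lp (fun _ : ℤ => ℂ) 2)‖^2) from
        (Real.sqrt_sq (norm_nonneg _)).symm]
      rw [lp_norm_sq hD]
      rfl
    simp only [hnorm]
    have h0 := (Real.continuous_sqrt.tendsto 0).comp (trunc_sub_normSq_tendsto hh2)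
    simpa [Function.comp_def] using h0
  -- upper estimate for arbitrary h in ℓ²(S)
  have upper : ∀ (h : ℤ → ℂ), Memℓp h 2 → (∀ j ∉ S, h j = 0) →
      Summable (fun i => ‖dotP h (F i)‖^2) ∧ (∑' i, ‖dotP h (F i)‖^2) ≤ normSq2 h := by
    intro h hh2 hhS
    have hconv : ∀ i : ι, Tendsto (fun R : ℕ => dotP (trunc R h) (F i)) atTop
        (nhds (dotP h (F i))) := by
      intro i
      have hcont : Continuous (fun x : lp (fun _ : ℤ => ℂ) 2 =>
          inner (𝕜 := ℂ) (⟨F i, hF i⟩ : lp (fun _ : ℤ => ℂ) 2) x) :=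
        continuous_const.inner continuous_id
      have := (hcont.tendsto _).comp (hlim h hh2)
      have heq : ∀ R : ℕ, dotP (trunc R h) (F i) = inner (𝕜 := ℂ)
          (⟨F i, hF i⟩ : lp (fun _ : ℤ => ℂ) 2)
          (⟨trunc R h, trunc_memℓp R h⟩ : lp (fun _ : ℤ => ℂ) 2) := fun R =>
        dotP_eq_inner (trunc_memℓp R h) (hF i)
      rw [show dotP h (F i) = inner (𝕜 := ℂ) (⟨F i, hF i⟩ : lp (fun _ : ℤ => ℂ) 2)
          (⟨h, hh2⟩ : lp (fun _ : ℤ => ℂ) 2) from dotP_eq_inner hh2 (hF i)]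
      simp only [heq]
      exact this
    have hI : ∀ I : Finset ι, ∑ i ∈ I, ‖dotP h (F i)‖^2 ≤ normSq2 h := by
      intro I
      have hR : ∀ R : ℕ, ∑ i ∈ I, ‖dotP (trunc R h) (F i)‖^2 ≤ normSq2 h := by
        intro R
        have hfin' := hfin (trunc R h) (htrT h R) (htrS h hhS R)
        calc ∑ i ∈ I, ‖dotP (trunc R h) (F i)‖^2
            ≤ ∑' i, ‖dotP (trunc R h) (F i)‖^2 :=
              hfin'.1.sum_le_tsum I (fun i _ => by positivity)
          _ = normSq2 (trunc R h) := hfin'.2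
          _ ≤ normSq2 h := trunc_normSq_le hh2 R
      have hlimI : Tendsto (fun R : ℕ => ∑ i ∈ I, ‖dotP (trunc R h) (F i)‖^2) atTop
          (nhds (∑ i ∈ I, ‖dotP h (F i)‖^2)) :=
        tendsto_finset_sum I (fun i _ => ((hconv i).norm).pow 2)
      exact le_of_tendsto hlimI (Filter.Eventually.of_forall hR)
    have hsummable : Summable (fun i => ‖dotP h (F i)‖^2) :=
      summable_of_sum_le (fun i => by positivity) hI
    exact ⟨hsummable, hsummable.tsum_le_of_sum_le hI⟩
  obtain ⟨hPSsum, hPSle⟩ := upper f hf2 hfS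
  refine ⟨hPSsum, le_antisymm hPSle ?_⟩
  -- lower bound via triangle inequality in lp(ι)
  set A : lp (fun _ : ι => ℂ) 2 := ⟨fun i => dotP f (F i),
    (memℓp_two_iff (fun i => dotP f (F i))).2 hPSsum⟩ with hA
  have hlow : ∀ R : ℕ, normSq2 (trunc R f) ≤
      (‖A‖ + Real.sqrt (normSq2 (fun j => f j - trunc R f j)))^2 := by
    intro R
    have hfin' := hfin (trunc R f) (htrT f R) (htrS f hfS R)
    obtain ⟨hDsum, hDle⟩ := upper (fun j => f j - trunc R f j) (hsubmem f hf2 R)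
      (fun j hj => by simp [hfS j hj, trunc, hfS])
    set AR : lp (fun _ : ι => ℂ) 2 := ⟨fun i => dotP (trunc R f) (F i),
      (memℓp_two_iff (fun i => dotP (trunc R f) (F i))).2 hfin'.1⟩ with hAR
    set DR : lp (fun _ : ι => ℂ) 2 := ⟨fun i => dotP (fun j => f j - trunc R f j) (F i),
      (memℓp_two_iff (fun i => dotP (fun j => f j - trunc R f j) (F i))).2 hDsum⟩ with hDR
    have hsplit : AR = A - DR := by
      apply lp.ext
      rw [lp.coeFn_sub]
      funext i
      have h1 : Summable (fun j => trunc R f j * (starRingEnd ℂ) (F i j)) :=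
        summable_mul_conj (trunc_memℓp R f) (hF i)
      have h2 : Summable (fun j => (f j - trunc R f j) * (starRingEnd ℂ) (F i j)) :=
        summable_mul_conj (hsubmem f hf2 R) (hF i)
      have : dotP f (F i) = dotP (trunc R f) (F i) + dotP (fun j => f j - trunc R f j) (F i) := by
        rw [dotP, dotP, dotP, ← h1.tsum_add h2]
        exact tsum_congr fun j => by ring
      simp only [Pi.sub_apply]
      show dotP (trunc R f) (F i) = dotP f (F i) - dotP (fun j => f j - trunc R f j) (F i)
      rw [this]; ring
    have hARnorm : ‖AR‖^2 = normSq2 (trunc R f) := by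
      rw [hAR, lp_norm_sq, hfin'.2]
    have hDRnorm : ‖DR‖ ≤ Real.sqrt (normSq2 (fun j => f j - trunc R f j)) := by
      have h1 : ‖DR‖^2 ≤ normSq2 (fun j => f j - trunc R f j) := by
        rw [hDR, lp_norm_sq]; exact hDle
      have := Real.sqrt_le_sqrt h1
      rwa [Real.sqrt_sq (norm_nonneg _)] at this
    have htri : ‖AR‖ ≤ ‖A‖ + ‖DR‖ := by
      rw [hsplit]
      exact norm_sub_le A DR
    have : ‖AR‖ ≤ ‖A‖ + Real.sqrt (normSq2 (fun j => f j - trunc R f j)) :=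
      htri.trans (by linarith)
    calc normSq2 (trunc R f) = ‖AR‖^2 := hARnorm.symm
      _ ≤ (‖A‖ + Real.sqrt (normSq2 (fun j => f j - trunc R f j)))^2 := by
          apply pow_le_pow_left₀ (norm_nonneg _) this
  -- pass to the limit
  have hLHS : Tendsto (fun R : ℕ => normSq2 (trunc R f)) atTop (nhds (normSq2 f)) := by
    have heq : ∀ R : ℕ, normSq2 (trunc R f) = ∑ j ∈ Finset.Icc (-(R:ℤ)) (R:ℤ), ‖f j‖^2 := by
      intro R
      rw [normSq2, tsum_eq_sum (s := Finset.Icc (-(R:ℤ)) (R:ℤ))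
        (by intro j hj; simp [trunc, hj])]
      exact Finset.sum_congr rfl fun j hj => by simp [trunc, hj]
    simp only [heq]
    exact tendsto_sum_Icc ((memℓp_two_iff f).1 hf2)
  have hRHS : Tendsto (fun R : ℕ =>
      (‖A‖ + Real.sqrt (normSq2 (fun j => f j - trunc R f j)))^2) atTop (nhds (‖A‖^2)) := by
    have h1 := (Real.continuous_sqrt.tendsto 0).comp (trunc_sub_normSq_tendsto hf2)
    have h2 : Tendsto (fun R : ℕ =>
        ‖A‖ + Real.sqrt (normSq2 (fun j => f j - trunc R f j))) atTop (nhds (‖A‖ + 0)) := by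
      apply Filter.Tendsto.const_add
      simpa [Function.comp_def] using h1
    have := h2.pow 2
    simpa using this
  have hfinal : normSq2 f ≤ ‖A‖^2 :=
    le_of_tendsto_of_tendsto' hLHS hRHS hlow
  rwa [hA, lp_norm_sq] at hfinal

end
noncomputable section
open Finset

lemma memℓp_gabor (L M N : ℕ) (g : ℕ → ℤ → ℂ) (hg : ∀ l, Memℓp (g (l : Fin L)) 2)
    (i : Fin L × ℤ × Fin M) : Memℓp (gaborFam L M N g i) 2 := by
  rw [memℓp_two_iff]
  have hn : ∀ j : ℤ, ‖gaborFam L M N g i j‖ = ‖g i.1 (j - i.2.1 * (N:ℤ))‖ := by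
    intro j
    rw [gaborFam, norm_mul]
    rw [show (2 * (Real.pi : ℂ) * Complex.I * ((i.2.2 : ℕ) : ℂ) * (j : ℂ) / (M : ℂ))
        = ((2 * Real.pi * ((i.2.2:ℕ):ℝ) * ((j:ℤ):ℝ) / ((M:ℕ):ℝ) : ℝ) : ℂ) * Complex.I by
      push_cast; ring]
    rw [Complex.norm_exp_ofReal_mul_I, one_mul]
  simp_rw [hn]
  have hmem := memℓp_shift (hg i.1) (-(i.2.1 * (N:ℤ)))
  rw [memℓp_two_iff] at hmem
  simpa [sub_eq_add_neg] using hmem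

lemma matEntry_period (M N : ℕ) (φ ψ : ℤ → ℂ) (j k t : ℤ) :
    matEntry M N φ ψ (j + t * (N:ℤ)) k = matEntry M N φ ψ j k := by
  rw [matEntry, matEntry]
  rw [← (Equiv.subRight t).tsum_eq (fun n : ℤ =>
    φ (j - n * (N:ℤ)) * (starRingEnd ℂ) (ψ (j + k * (M:ℤ) - n * (N:ℤ))))]
  exact tsum_congr fun n => by
    simp only [Equiv.subRight_apply]
    rw [show j + t*(N:ℤ) - n*(N:ℤ) = j - (n - t) * (N:ℤ) by ring,
        show j + t*(N:ℤ) + k*(M:ℤ) - n*(N:ℤ) = j + k*(M:ℤ) - (n - t)*(N:ℤ) by ring]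

lemma matEntry_vanish (M N : ℕ) {S : Set ℤ} (hS : ∀ j ∈ S, ∀ n : ℤ, j + n * (N : ℤ) ∈ S)
    (φ ψ : ℤ → ℂ) (hψ : ∀ x ∉ S, ψ x = 0) (j k : ℤ) (hout : j + k * (M:ℤ) ∉ S) :
    matEntry M N φ ψ j k = 0 := by
  rw [matEntry]
  convert tsum_zero with n
  have : j + k * (M:ℤ) - n * (N:ℤ) ∉ S := by
    intro hmem
    exact hout (by simpa using hS _ hmem n)
  rw [hψ _ this]
  simp

end
noncomputable section
open Finset

lemma gsum_reduce (L M N : ℕ) (hN : 0 < N) {S : Set ℤ}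
    (hS : ∀ j ∈ S, ∀ n : ℤ, j + n * (N:ℤ) ∈ S)
    (g : ℕ → ℤ → ℂ) {j : ℤ} (hj : j ∈ S) :
    ∃ j₀, j₀ ∈ S ∩ Set.Ico (0:ℤ) (N:ℤ) ∧ ∀ k : ℤ,
      ∑ l ∈ Finset.range L, matEntry M N (g l) (g l) j k
        = ∑ l ∈ Finset.range L, matEntry M N (g l) (g l) j₀ k := by
  have hNz : (N:ℤ) ≠ 0 := by exact_mod_cast hN.ne'
  refine ⟨j % (N:ℤ), ⟨?_, ?_, ?_⟩, ?_⟩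
  · have h1 : j % (N:ℤ) = j + (-(j / (N:ℤ))) * (N:ℤ) := by rw [Int.emod_def]; ring
    rw [h1]; exact hS j hj _
  · exact Int.emod_nonneg j hNz
  · exact Int.emod_lt_of_pos j (by exact_mod_cast hN)
  · intro k
    refine Finset.sum_congr rfl fun l _ => ?_
    conv_lhs => rw [show j = j % (N:ℤ) + (j / (N:ℤ)) * (N:ℤ) by rw [Int.emod_def]; ring]
    rw [matEntry_period]

lemma parseval_fin (L M N : ℕ) (hM : 0 < M) (hN : 0 < N) {S : Set ℤ}
    (hS : ∀ j ∈ S, ∀ n : ℤ, j + n * (N:ℤ) ∈ S) (g : ℕ → ℤ → ℂ) (hg : ∀ l, Memℓp (g l) 2)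
    (ha : ∀ j ∈ S ∩ Set.Ico (0 : ℤ) (N : ℤ),
        ∑ l ∈ Finset.range L, matEntry M N (g l) (g l) j 0 = 1 / (M : ℂ))
    (hb : ∀ j ∈ S ∩ Set.Ico (0 : ℤ) (N : ℤ), ∀ k : ℤ, k ≠ 0 →
        ∑ l ∈ Finset.range L, matEntry M N (g l) (g l) j k = 0)
    (f : ℤ → ℂ) (hT : ∃ T : Finset ℤ, ∀ j ∉ T, f j = 0) (hfS : ∀ j ∉ S, f j = 0) :
    Summable (fun i : Fin L × ℤ × Fin M => ‖dotP f (gaborFam L M N g i)‖^2) ∧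
    (∑' i : Fin L × ℤ × Fin M, ‖dotP f (gaborFam L M N g i)‖^2) = normSq2 f := by
  obtain ⟨T, hT⟩ := hT
  obtain ⟨hsum, heq⟩ := core L M N hM hN g hg f T hT
  refine ⟨hsum, ?_⟩
  have hMz : (M:ℂ) ≠ 0 := by exact_mod_cast hM.ne'
  have hterm : ∀ j ∈ T, ∀ j' ∈ T, (if (M:ℤ) ∣ (j' - j) then
      f j * (starRingEnd ℂ) (f j') * (starRingEnd ℂ)
        (∑ l ∈ Finset.range L, matEntry M N (g l) (g l) j ((j' - j) / (M:ℤ))) else 0)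
      = if j' = j then f j * (starRingEnd ℂ) (f j) * (1 / (M:ℂ)) else 0 := by
    intro j _ j' _
    by_cases hjz : f j = 0
    · simp [hjz]
    have hjS : j ∈ S := by by_contra h; exact hjz (hfS j h)
    obtain ⟨j₀, hj₀, hred⟩ := gsum_reduce L M N hN hS g hjS
    by_cases hjj : j' = j
    · rw [hjj]
      rw [if_pos (by simp : (M:ℤ) ∣ (j - j)), if_pos rfl]
      rw [show (j - j) / (M:ℤ) = 0 by simp]
      rw [hred 0, ha j₀ hj₀]
      congr 1
      rw [map_div₀, map_one, map_natCast]
    · rw [if_neg hjj]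
      by_cases hdvd : (M:ℤ) ∣ (j' - j)
      · rw [if_pos hdvd]
        have hk : (j' - j) / (M:ℤ) ≠ 0 := by
          intro h0
          have := Int.ediv_mul_cancel hdvd
          rw [h0, zero_mul] at this
          exact hjj (by omega)
        rw [hred _, hb j₀ hj₀ _ hk, map_zero, mul_zero]
      · rw [if_neg hdvd]
  have hrhs : (M:ℂ) * ∑ j ∈ T, ∑ j' ∈ T, (if (M:ℤ) ∣ (j' - j) then
      f j * (starRingEnd ℂ) (f j') * (starRingEnd ℂ)
        (∑ l ∈ Finset.range L, matEntry M N (g l) (g l) j ((j' - j) / (M:ℤ))) else 0)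
      = ((normSq2 f : ℝ) : ℂ) := by
    rw [Finset.sum_congr rfl (fun j hj => Finset.sum_congr rfl (fun j' hj' => hterm j hj j' hj'))]
    have hinner : ∀ j ∈ T, ∑ j' ∈ T, (if j' = j then f j * (starRingEnd ℂ) (f j) * (1 / (M:ℂ))
        else 0) = f j * (starRingEnd ℂ) (f j) * (1 / (M:ℂ)) := by
      intro j hj
      rw [Finset.sum_ite_eq' T j (fun _ => f j * (starRingEnd ℂ) (f j) * (1 / (M:ℂ)))]
      rw [if_pos hj]
    rw [Finset.sum_congr rfl hinner, Finset.mul_sum]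
    have : ∀ j ∈ T, (M:ℂ) * (f j * (starRingEnd ℂ) (f j) * (1 / (M:ℂ)))
        = ((‖f j‖^2 : ℝ) : ℂ) := by
      intro j hj
      rw [normsq_c]
      field_simp
    rw [Finset.sum_congr rfl this]
    rw [normSq2, tsum_eq_sum (s := T) (by intro j hj; simp [hT j hj])]
    push_cast
    rfl
  rw [hrhs] at heq
  exact_mod_cast heq

end
noncomputable section
open Finset

lemma deltaA (L M N : ℕ) (hM : 0 < M) (hN : 0 < N) (g : ℕ → ℤ → ℂ)
    (hg : ∀ l, Memℓp (g l) 2) {S : Set ℤ}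
    (hPS : ∀ f : ℤ → ℂ, Memℓp f 2 → (∀ j ∉ S, f j = 0) →
      (∑' i : Fin L × ℤ × Fin M, ‖dotP f (gaborFam L M N g i)‖^2) = normSq2 f)
    {j : ℤ} (hj : j ∈ S) :
    ∑ l ∈ Finset.range L, matEntry M N (g l) (g l) j 0 = 1/(M:ℂ) := by
  set f : ℤ → ℂ := fun x => if x = j then 1 else 0 with hf
  have hsupp : ∀ x ∉ ({j} : Finset ℤ), f x = 0 := by
    intro x hx
    simp only [Finset.mem_singleton] at hx
    simp [hf, hx]
  have hmem : Memℓp f 2 := (memℓp_two_iff f).2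
    (summable_of_ne_finset_zero (s := {j}) (fun x hx => by simp [hsupp x hx]))
  have hfS : ∀ x ∉ S, f x = 0 := by
    intro x hx
    rcases eq_or_ne x j with rfl | hxj
    · exact absurd hj hx
    · simp [hf, hxj]
  obtain ⟨hsum, heq⟩ := core L M N hM hN g hg f {j} hsupp
  rw [hPS f hmem hfS] at heq
  have hns : normSq2 f = 1 := by
    rw [normSq2, tsum_eq_sum (s := {j}) (fun x hx => by simp [hsupp x hx])]
    simp [hf]
  rw [hns] at heq
  rw [Finset.sum_singleton, Finset.sum_singleton, if_pos (by simp : (M:ℤ) ∣ (j-j))] at heq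
  rw [show (j-j)/(M:ℤ) = 0 by simp] at heq
  have hfj : f j = 1 := by simp [hf]
  rw [hfj, map_one, one_mul, one_mul, Complex.ofReal_one] at heq
  have hMz : (M:ℂ) ≠ 0 := by exact_mod_cast hM.ne'
  have hconj : (starRingEnd ℂ) (∑ l ∈ Finset.range L, matEntry M N (g l) (g l) j 0)
      = 1/(M:ℂ) := by
    field_simp at heq ⊢
    linear_combination -heq
  have := congrArg (starRingEnd ℂ) hconj
  rwa [Complex.conj_conj, map_div₀, map_one, map_natCast] at this

end
noncomputable section
open Finset

lemma deltaB (L M N : ℕ) (hM : 0 < M) (hN : 0 < N) {S : Set ℤ}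
    (hSper : ∀ j ∈ S, ∀ n : ℤ, j + n * (N : ℤ) ∈ S)
    (g : ℕ → ℤ → ℂ) (hg : ∀ l, Memℓp (g l) 2) (hgS : ∀ l, ∀ x ∉ S, g l x = 0)
    (hPS : ∀ f : ℤ → ℂ, Memℓp f 2 → (∀ j ∉ S, f j = 0) →
      (∑' i : Fin L × ℤ × Fin M, ‖dotP f (gaborFam L M N g i)‖^2) = normSq2 f)
    {j : ℤ} (hj : j ∈ S) (k : ℤ) (hk : k ≠ 0) :
    ∑ l ∈ Finset.range L, matEntry M N (g l) (g l) j k = 0 := by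
  by_cases hj'S : j + k * (M:ℤ) ∈ S
  swap
  · exact Finset.sum_eq_zero fun l _ => matEntry_vanish M N hSper (g l) (g l) (hgS l) j k hj'S
  have hMzZ : (M:ℤ) ≠ 0 := by exact_mod_cast hM.ne'
  have hMz : (M:ℂ) ≠ 0 := by exact_mod_cast hM.ne'
  set j' := j + k * (M:ℤ) with hj'def
  have hne : j' ≠ j := by
    intro h
    have h0 : k * (M:ℤ) = 0 := by rw [hj'def] at h; linarith
    rcases mul_eq_zero.mp h0 with h1 | h1
    · exact hk h1
    · exact hMzZ h1
  have hE1 : (M:ℂ) * (starRingEnd ℂ) (∑ l ∈ Finset.range L, matEntry M N (g l) (g l) j 0)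
      = 1 := by
    rw [deltaA L M N hM hN g hg hPS hj, map_div₀, map_one, map_natCast]
    field_simp
  have hE2 : (M:ℂ) * (starRingEnd ℂ) (∑ l ∈ Finset.range L, matEntry M N (g l) (g l) j' 0)
      = 1 := by
    rw [deltaA L M N hM hN g hg hPS hj'S, map_div₀, map_one, map_natCast]
    field_simp
  have hd11 : (M:ℤ) ∣ (j - j) := by simp
  have hd22 : (M:ℤ) ∣ (j' - j') := by simp
  have hd12 : (M:ℤ) ∣ (j' - j) := ⟨k, by rw [hj'def]; ring⟩
  have hd21 : (M:ℤ) ∣ (j - j') := ⟨-k, by rw [hj'def]; ring⟩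
  have hq11 : (j - j)/(M:ℤ) = 0 := by simp
  have hq22 : (j' - j')/(M:ℤ) = 0 := by simp
  have hq12 : (j' - j)/(M:ℤ) = k := by
    rw [show j' - j = k * (M:ℤ) by rw [hj'def]; ring]
    exact Int.mul_ediv_cancel k hMzZ
  have hq21 : (j - j')/(M:ℤ) = -k := by
    rw [show j - j' = -k * (M:ℤ) by rw [hj'def]; ring]
    exact Int.mul_ediv_cancel (-k) hMzZ
  have key : ∀ c : ℂ, c * (starRingEnd ℂ) c = 1 →
      (M:ℂ) * ((starRingEnd ℂ) c *
          (starRingEnd ℂ) (∑ l ∈ Finset.range L, matEntry M N (g l) (g l) j k)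
        + c * (starRingEnd ℂ) (∑ l ∈ Finset.range L, matEntry M N (g l) (g l) j' (-k))) = 0 := by
    intro c hcc
    set f : ℤ → ℂ := fun x => if x = j then 1 else if x = j' then c else 0 with hfdef
    have hsupp : ∀ x ∉ ({j, j'} : Finset ℤ), f x = 0 := by
      intro x hx
      simp only [Finset.mem_insert, Finset.mem_singleton, not_or] at hx
      simp [hfdef, hx.1, hx.2]
    have hmem : Memℓp f 2 := (memℓp_two_iff f).2
      (summable_of_ne_finset_zero (s := {j, j'}) (fun x hx => by simp [hsupp x hx]))
    have hfS : ∀ x ∉ S, f x = 0 := by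
      intro x hx
      have h1 : x ≠ j := fun h => hx (h ▸ hj)
      have h2 : x ≠ j' := fun h => hx (h ▸ hj'S)
      simp [hfdef, h1, h2]
    obtain ⟨hsum, heq⟩ := core L M N hM hN g hg f {j, j'} hsupp
    rw [hPS f hmem hfS] at heq
    have hfj : f j = 1 := by simp [hfdef]
    have hfj' : f j' = c := by simp [hfdef, hne]
    have hcnorm : (‖c‖^2 : ℝ) = 1 := by
      have h1 : ((‖c‖^2 : ℝ) : ℂ) = 1 := by rw [normsq_c c, hcc]
      exact_mod_cast h1
    have hns : normSq2 f = 2 := by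
      rw [normSq2, tsum_eq_sum (s := {j, j'}) (fun x hx => by simp [hsupp x hx])]
      rw [Finset.sum_pair (Ne.symm hne), hfj, hfj', hcnorm]
      norm_num
    rw [hns] at heq
    rw [Finset.sum_pair (Ne.symm hne)] at heq
    rw [Finset.sum_pair (Ne.symm hne), Finset.sum_pair (Ne.symm hne)] at heq
    rw [if_pos hd11, if_pos hd12, if_pos hd21, if_pos hd22] at heq
    rw [hq11, hq12, hq21, hq22, hfj, hfj', map_one] at heq
    push_cast at heq
    linear_combination -heq - hE1
      - ((M:ℂ) * (starRingEnd ℂ) (∑ l ∈ Finset.range L, matEntry M N (g l) (g l) j' 0)) * hcc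
      - hE2
  have h1 := key 1 (by simp)
  have h2 := key Complex.I (by rw [Complex.conj_I, mul_neg, Complex.I_mul_I, neg_neg])
  rw [map_one, one_mul, one_mul] at h1
  rw [Complex.conj_I] at h2
  have hA := (mul_eq_zero.mp h1).resolve_left hMz
  have hB := (mul_eq_zero.mp h2).resolve_left hMz
  have hX : (starRingEnd ℂ) (∑ l ∈ Finset.range L, matEntry M N (g l) (g l) j k) = 0 := by
    linear_combination (1/2 : ℂ) * hA + (Complex.I/2) * hB
      + (((starRingEnd ℂ) (∑ l ∈ Finset.range L, matEntry M N (g l) (g l) j k)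
          - (starRingEnd ℂ) (∑ l ∈ Finset.range L, matEntry M N (g l) (g l) j' (-k)))/2)
        * Complex.I_sq
  have := congrArg (starRingEnd ℂ) hX
  rwa [Complex.conj_conj, map_zero] at this

end

theorem stmt7 (L M N : ℕ) (hL : 0 < L) (hM : 0 < M) (hN : 0 < N)
    (S : Set ℤ) (hS : IsPeriodicSet N S)
    (g : ℕ → ℤ → ℂ) (hg : ∀ l, MemL2S S (g l)) :
    IsFrameOn S (gaborFam L M N g) 1 1 ↔
      ((∀ j ∈ S ∩ Set.Ico (0 : ℤ) (N : ℤ),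
          ∑ l ∈ Finset.range L, matEntry M N (g l) (g l) j 0 = 1 / (M : ℂ)) ∧
       (∀ j ∈ S ∩ Set.Ico (0 : ℤ) (N : ℤ), ∀ k : ℤ, k ≠ 0 →
          ∑ l ∈ Finset.range L, matEntry M N (g l) (g l) j k = 0)) := by
  have hg2 : ∀ l, Memℓp (g l) 2 := fun l => (hg l).1
  have hgS : ∀ l, ∀ x ∉ S, g l x = 0 := fun l => (hg l).2
  constructor
  · intro hframe
    have hPS : ∀ f : ℤ → ℂ, Memℓp f 2 → (∀ j ∉ S, f j = 0) →
        (∑' i : Fin L × ℤ × Fin M, ‖dotP f (gaborFam L M N g i)‖^2) = normSq2 f := by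
      intro f h1 h2
      obtain ⟨hlo, hhi⟩ := hframe f ⟨h1, h2⟩
      rw [one_mul] at hlo hhi
      linarith
    constructor
    · intro j hj
      exact deltaA L M N hM hN g hg2 hPS hj.1
    · intro j hj k hk
      exact deltaB L M N hM hN hS.2 g hg2 hgS hPS hj.1 k hk
  · rintro ⟨ha, hb⟩ f hf
    obtain ⟨-, heq⟩ := parseval_extend S (gaborFam L M N g) (memℓp_gabor L M N g (fun l => hg2 _))
      (fun h hT hhS => parseval_fin L M N hM hN hS.2 g hg2 ha hb h hT hhS) f hf.1 hf.2
    rw [heq]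
    constructor <;> rw [one_mul]
end

section
/- Two Bessel multiwindow Gabor systems G(g,L,M,N) and G(h,L,M,N) in ℓ²(S) are dual frames if and only if (a) for all j ∈ S ∩ {0,...,N−1}, ∑_{l=0}^{L-1} ∑_{n∈ℤ} h_l(j−nN)·conj(g_l(j−nN)) = 1/M, and (b) for all j ∈ S ∩ {0,...,N−1} and all k ∈ ℤ∖{0}, ∑_{l=0}^{L-1} ∑_{n∈ℤ} h_l(j−nN)·conj(g_l(j+kM−nN)) = 0. -/
open Complex MeasureTheory

section MWauxAll


variable {ι : Type*}

lemma MW.abs_summable {a b : ι → ℂ} (ha : Summable fun i => ‖a i‖^2)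
    (hb : Summable fun i => ‖b i‖^2) : Summable fun i => ‖a i‖ * ‖b i‖ := by
  refine Summable.of_nonneg_of_le (fun i => by positivity) (fun i => ?_)
    ((ha.add hb).div_const 2)
  have h := sq_nonneg (‖a i‖ - ‖b i‖)
  nlinarith [norm_nonneg (a i), norm_nonneg (b i)]

lemma MW.summable_mul {a b : ι → ℂ} (ha : Summable fun i => ‖a i‖^2)
    (hb : Summable fun i => ‖b i‖^2) : Summable fun i => a i * b i := by
  refine Summable.of_norm ?_
  simpa [norm_mul] using MW.abs_summable ha hb

lemma MW.tsum_abs_mul_le {a b : ι → ℂ} (ha : Summable fun i => ‖a i‖^2)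
    (hb : Summable fun i => ‖b i‖^2) :
    ∑' i, ‖a i‖ * ‖b i‖ ≤ Real.sqrt (∑' i, ‖a i‖^2) * Real.sqrt (∑' i, ‖b i‖^2) := by
  refine Summable.tsum_le_of_sum_le (MW.abs_summable ha hb) (fun s => ?_)
  have h1 : (∑ i ∈ s, ‖a i‖ * ‖b i‖)^2 ≤ (∑ i ∈ s, ‖a i‖^2) * ∑ i ∈ s, ‖b i‖^2 :=
    Finset.sum_mul_sq_le_sq_mul_sq s _ _
  have h2 : (∑ i ∈ s, ‖a i‖^2) ≤ ∑' i, ‖a i‖^2 :=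
    Summable.sum_le_tsum s (fun i _ => by positivity) ha
  have h3 : (∑ i ∈ s, ‖b i‖^2) ≤ ∑' i, ‖b i‖^2 :=
    Summable.sum_le_tsum s (fun i _ => by positivity) hb
  have hnn : (0:ℝ) ≤ ∑ i ∈ s, ‖a i‖ * ‖b i‖ := Finset.sum_nonneg fun i _ => by positivity
  have h4 : (∑ i ∈ s, ‖a i‖ * ‖b i‖)^2 ≤ (∑' i, ‖a i‖^2) * ∑' i, ‖b i‖^2 := by
    calc (∑ i ∈ s, ‖a i‖ * ‖b i‖)^2 ≤ (∑ i ∈ s, ‖a i‖^2) * ∑ i ∈ s, ‖b i‖^2 := h1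
    _ ≤ (∑' i, ‖a i‖^2) * ∑' i, ‖b i‖^2 := by
        apply mul_le_mul h2 h3 (Finset.sum_nonneg fun i _ => by positivity)
          (tsum_nonneg fun i => by positivity)
  calc ∑ i ∈ s, ‖a i‖ * ‖b i‖ = Real.sqrt ((∑ i ∈ s, ‖a i‖ * ‖b i‖)^2) :=
        (Real.sqrt_sq hnn).symm
  _ ≤ Real.sqrt ((∑' i, ‖a i‖^2) * ∑' i, ‖b i‖^2) := Real.sqrt_le_sqrt h4
  _ = _ := Real.sqrt_mul (tsum_nonneg fun i => by positivity) _

lemma MW.norm_tsum_mul_le {a b : ι → ℂ} (ha : Summable fun i => ‖a i‖^2)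
    (hb : Summable fun i => ‖b i‖^2) :
    ‖∑' i, a i * b i‖ ≤ Real.sqrt (∑' i, ‖a i‖^2) * Real.sqrt (∑' i, ‖b i‖^2) := by
  refine le_trans (norm_tsum_le_tsum_norm ?_) ?_
  · simpa [norm_mul] using MW.abs_summable ha hb
  · simpa [norm_mul] using MW.tsum_abs_mul_le ha hb



lemma MW.gabor_norm (L M N : ℕ) (g : ℕ → ℤ → ℂ) (i : Fin L × ℤ × Fin M) (j : ℤ) :
    ‖gaborFam L M N g i j‖ = ‖g i.1 (j - i.2.1 * (N:ℤ))‖ := by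
  unfold gaborFam
  rw [norm_mul]
  have : (2 * (Real.pi : ℂ) * Complex.I * ((i.2.2 : ℕ) : ℂ) * (j : ℂ) / (M : ℂ))
      = ((2 * Real.pi * ((i.2.2 : ℕ):ℝ) * (j:ℝ) / (M:ℝ) : ℝ) : ℂ) * Complex.I := by
    push_cast; ring
  rw [this, Complex.norm_exp_ofReal_mul_I, one_mul]

lemma MW.shift_inj {N : ℕ} (hN : 0 < N) (j : ℤ) :
    Function.Injective (fun n : ℤ => j - n * (N:ℤ)) := by
  intro a b hab
  simp only [sub_right_inj] at hab
  exact mul_right_cancel₀ (by exact_mod_cast hN.ne') hab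

lemma MW.summable_sq_shift {φ : ℤ → ℂ} (hφ : Summable fun t => ‖φ t‖^2)
    {N : ℕ} (hN : 0 < N) (j : ℤ) :
    Summable fun n : ℤ => ‖φ (j - n * (N:ℤ))‖^2 :=
  hφ.comp_injective (MW.shift_inj hN j)

lemma MW.summable_sq_gabor (L M N : ℕ) (hN : 0 < N) (g : ℕ → ℤ → ℂ)
    (hg : ∀ l, Summable fun t => ‖g l t‖^2) (j : ℤ) :
    Summable fun i : Fin L × ℤ × Fin M => ‖gaborFam L M N g i j‖^2 := by
  simp only [MW.gabor_norm]
  have hnn : (0 : Fin L × ℤ × Fin M → ℝ) ≤ fun i => ‖g i.1 (j - i.2.1 * (N:ℤ))‖^2 :=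
    fun i => by positivity
  rw [summable_prod_of_nonneg hnn]
  constructor
  · intro l
    have hnn2 : (0 : ℤ × Fin M → ℝ) ≤ fun p => ‖g l (j - p.1 * (N:ℤ))‖^2 := fun p => by positivity
    rw [summable_prod_of_nonneg hnn2]
    exact ⟨fun n => .of_finite, by
      simp only [tsum_fintype, Finset.sum_const, Finset.card_univ, Fintype.card_fin, nsmul_eq_mul]
      exact (MW.summable_sq_shift (hg l) hN j).mul_left _⟩
  · exact .of_finite

noncomputable section
open Complex

def MW.restr (s : Finset ℤ) (f : ℤ → ℂ) : ℤ → ℂ := fun j => if j ∈ s then f j else 0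
def MW.corestr (s : Finset ℤ) (f : ℤ → ℂ) : ℤ → ℂ := fun j => if j ∈ s then 0 else f j

lemma MW.restr_add_corestr (s : Finset ℤ) (f : ℤ → ℂ) (j : ℤ) :
    MW.restr s f j + MW.corestr s f j = f j := by
  unfold MW.restr MW.corestr; split <;> simp

lemma MW.sq_summable {f : ℤ → ℂ} (hf : Memℓp f 2) : Summable fun j => ‖f j‖^2 := by
  have := hf.summable (p := 2) (by norm_num)
  simpa [Real.rpow_natCast] using this

lemma MW.memℓp_of_sq {f : ℤ → ℂ} (h : Summable fun j => ‖f j‖^2) : Memℓp f 2 := by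
  apply memℓp_gen
  simpa [Real.rpow_natCast] using h

lemma MW.restr_sq_summable {f : ℤ → ℂ} (hf : Summable fun j => ‖f j‖^2) (s : Finset ℤ) :
    Summable fun j => ‖MW.restr s f j‖^2 := by
  refine Summable.of_nonneg_of_le (fun j => by positivity) (fun j => ?_) hf
  unfold MW.restr; split
  · exact le_rfl
  · rw [norm_zero]; simpa using sq_nonneg ‖f j‖

lemma MW.corestr_sq_summable {f : ℤ → ℂ} (hf : Summable fun j => ‖f j‖^2) (s : Finset ℤ) :
    Summable fun j => ‖MW.corestr s f j‖^2 := by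
  refine Summable.of_nonneg_of_le (fun j => by positivity) (fun j => ?_) hf
  unfold MW.corestr; split
  · rw [norm_zero]; simpa using sq_nonneg ‖f j‖
  · exact le_rfl

lemma MW.restr_memL2S {S : Set ℤ} {f : ℤ → ℂ} (hf : MemL2S S f) (s : Finset ℤ) :
    MemL2S S (MW.restr s f) := by
  refine ⟨MW.memℓp_of_sq (MW.restr_sq_summable (MW.sq_summable hf.1) s), fun j hj => ?_⟩
  unfold MW.restr; split <;> simp [hf.2 j hj]

lemma MW.corestr_memL2S {S : Set ℤ} {f : ℤ → ℂ} (hf : MemL2S S f) (s : Finset ℤ) :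
    MemL2S S (MW.corestr s f) := by
  refine ⟨MW.memℓp_of_sq (MW.corestr_sq_summable (MW.sq_summable hf.1) s), fun j hj => ?_⟩
  unfold MW.corestr; split <;> simp [hf.2 j hj]

lemma MW.corestr_normSq2 (s : Finset ℤ) (f : ℤ → ℂ) :
    normSq2 (MW.corestr s f) = ∑' j : {x // x ∉ s}, ‖f (j:ℤ)‖^2 := by
  unfold normSq2
  rw [← tsum_subtype_eq_of_support_subset (s := {x : ℤ | x ∉ s})
    (f := fun j => ‖MW.corestr s f j‖^2)]
  · apply tsum_congr
    intro j
    have hj2 : (j:ℤ) ∉ s := j.2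
    have : MW.corestr s f (j:ℤ) = f (j:ℤ) := by
      unfold MW.corestr
      simp [hj2]
    rw [this]
  · intro j hj
    by_contra hmem
    simp only [Set.mem_setOf_eq, not_not] at hmem
    apply hj
    unfold MW.corestr
    simp [hmem]

lemma MW.norm_apply_le_sqrt_normSq2 {f : ℤ → ℂ} (h : Summable fun j => ‖f j‖^2) (j : ℤ) :
    ‖f j‖ ≤ Real.sqrt (normSq2 f) := by
  have h1 : ‖f j‖^2 ≤ normSq2 f := Summable.le_tsum h j (fun _ _ => by positivity)
  have := Real.sqrt_le_sqrt h1
  rwa [Real.sqrt_sq (norm_nonneg _)] at this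

lemma MW.dotP_summable {f φ : ℤ → ℂ} (hf : Summable fun j => ‖f j‖^2)
    (hφ : Summable fun j => ‖φ j‖^2) :
    Summable fun j => f j * (starRingEnd ℂ) (φ j) := by
  refine MW.summable_mul hf ?_
  simpa using hφ

lemma MW.dotP_restr (s : Finset ℤ) (f φ : ℤ → ℂ) :
    dotP (MW.restr s f) φ = ∑ j ∈ s, f j * (starRingEnd ℂ) (φ j) := by
  unfold dotP
  rw [tsum_eq_sum (s := s)]
  · apply Finset.sum_congr rfl
    intro j hj
    unfold MW.restr
    simp [hj]
  · intro j hj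
    unfold MW.restr
    simp [hj]

lemma MW.dotP_split (s : Finset ℤ) {f : ℤ → ℂ} (φ : ℤ → ℂ)
    (hf : Summable fun j => ‖f j‖^2) (hφ : Summable fun j => ‖φ j‖^2) :
    dotP f φ = dotP (MW.restr s f) φ + dotP (MW.corestr s f) φ := by
  unfold dotP
  rw [← Summable.tsum_add (MW.dotP_summable (MW.restr_sq_summable hf s) hφ)
      (MW.dotP_summable (MW.corestr_sq_summable hf s) hφ)]
  apply tsum_congr
  intro j
  rw [← add_mul, MW.restr_add_corestr]

lemma MW.norm_dotP_le {f φ : ℤ → ℂ} (hf : Summable fun j => ‖f j‖^2)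
    (hφ : Summable fun j => ‖φ j‖^2) :
    ‖dotP f φ‖ ≤ Real.sqrt (normSq2 f) * Real.sqrt (normSq2 φ) := by
  unfold dotP normSq2
  have := MW.norm_tsum_mul_le (a := f) (b := fun j => (starRingEnd ℂ) (φ j)) hf (by simpa using hφ)
  simpa using this

end

noncomputable section
open Complex

lemma MW.charSum (M : ℕ) (hM : 0 < M) (d : ℤ) :
    ∑ m : Fin M, Complex.exp (2 * (Real.pi:ℂ) * Complex.I * ((m:ℕ):ℂ) * (d:ℂ) / (M:ℂ))
      = if (M:ℤ) ∣ d then (M:ℂ) else 0 := by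
  have hM0 : (M:ℂ) ≠ 0 := by exact_mod_cast hM.ne'
  set ω : ℂ := Complex.exp (2 * (Real.pi:ℂ) * Complex.I * (d:ℂ) / (M:ℂ)) with hω
  have hpow : ∀ m : ℕ, Complex.exp (2 * (Real.pi:ℂ) * Complex.I * (m:ℂ) * (d:ℂ) / (M:ℂ)) = ω ^ m := by
    intro m
    rw [hω, ← Complex.exp_nat_mul]
    congr 1
    ring
  have hsum : ∑ m : Fin M, Complex.exp (2 * (Real.pi:ℂ) * Complex.I * ((m:ℕ):ℂ) * (d:ℂ) / (M:ℂ))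
      = ∑ m ∈ Finset.range M, ω ^ m := by
    rw [← Fin.sum_univ_eq_sum_range (fun m => ω ^ m) M]
    exact Finset.sum_congr rfl fun m _ => hpow m
  by_cases hdvd : (M:ℤ) ∣ d
  · obtain ⟨c, hc⟩ := hdvd
    have hω1 : ω = 1 := by
      rw [hω, hc]
      have : 2 * (Real.pi:ℂ) * Complex.I * ((M * c : ℤ):ℂ) / (M:ℂ) = (c:ℂ) * (2 * (Real.pi:ℂ) * Complex.I) := by
        push_cast
        field_simp
      rw [this, Complex.exp_int_mul_two_pi_mul_I]
    rw [hsum, if_pos ⟨c, hc⟩]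
    simp [hω1]
  · have hω1 : ω ≠ 1 := by
      intro hcon
      apply hdvd
      rw [hω, Complex.exp_eq_one_iff] at hcon
      obtain ⟨n, hn⟩ := hcon
      have hπ : (Real.pi:ℂ) ≠ 0 := by exact_mod_cast Real.pi_ne_zero
      have h2πI : (2 * (Real.pi:ℂ) * Complex.I) ≠ 0 := by
        simp [Real.pi_ne_zero, Complex.I_ne_zero, Complex.ofReal_ne_zero]
      have hd : (d:ℂ) = (M:ℂ) * (n:ℂ) := by
        field_simp at hn
        apply mul_left_cancel₀ h2πI
        rw [hn]
      exact ⟨n, by exact_mod_cast hd⟩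
    rw [hsum, geom_sum_eq hω1, if_neg hdvd]
    have hωM : ω ^ M = 1 := by
      rw [hω, ← Complex.exp_nat_mul]
      have : (M:ℂ) * (2 * (Real.pi:ℂ) * Complex.I * (d:ℂ) / (M:ℂ)) = (d:ℂ) * (2 * (Real.pi:ℂ) * Complex.I) := by
        field_simp
      rw [this, Complex.exp_int_mul_two_pi_mul_I]
    rw [hωM]
    simp

end

noncomputable section
open Complex

lemma MW.gabor_cross (L M N : ℕ) (g h : ℕ → ℤ → ℂ) (i : Fin L × ℤ × Fin M) (j j₀ : ℤ) :
    (starRingEnd ℂ) (gaborFam L M N g i j₀) * gaborFam L M N h i j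
      = Complex.exp (2 * (Real.pi:ℂ) * Complex.I * ((i.2.2 : ℕ):ℂ) * (((j - j₀ : ℤ)):ℂ) / (M:ℂ))
        * (h i.1 (j - i.2.1 * (N:ℤ)) * (starRingEnd ℂ) (g i.1 (j₀ - i.2.1 * (N:ℤ)))) := by
  unfold gaborFam
  rw [map_mul]
  have hconj : (starRingEnd ℂ) (Complex.exp (2 * (Real.pi : ℂ) * Complex.I * ((i.2.2 : ℕ) : ℂ) * (j₀ : ℂ) / (M : ℂ)))
      = Complex.exp (-(2 * (Real.pi : ℂ) * Complex.I * ((i.2.2 : ℕ) : ℂ) * (j₀ : ℂ) / (M : ℂ))) := by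
    rw [← Complex.exp_conj]
    congr 1
    simp [map_div₀, map_mul, Complex.conj_I, Complex.conj_ofReal, map_ofNat,
      Complex.conj_natCast, map_intCast]
    ring
  rw [hconj]
  rw [show Complex.exp (2 * (Real.pi:ℂ) * Complex.I * ((i.2.2 : ℕ):ℂ) * (((j - j₀ : ℤ)):ℂ) / (M:ℂ))
      = Complex.exp (-(2 * (Real.pi : ℂ) * Complex.I * ((i.2.2 : ℕ) : ℂ) * (j₀ : ℂ) / (M : ℂ)))
        * Complex.exp (2 * (Real.pi : ℂ) * Complex.I * ((i.2.2 : ℕ) : ℂ) * (j : ℂ) / (M : ℂ)) from ?_]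
  · ring
  · rw [← Complex.exp_add]
    congr 1
    push_cast
    ring
end

noncomputable section
open Complex

lemma MW.kernel (L M N : ℕ) (hM : 0 < M) (hN : 0 < N) (g h : ℕ → ℤ → ℂ)
    (hg2 : ∀ l : ℕ, Summable fun t => ‖g l t‖^2) (hh2 : ∀ l : ℕ, Summable fun t => ‖h l t‖^2)
    (j j₀ : ℤ) :
    ∑' i : Fin L × ℤ × Fin M, (starRingEnd ℂ) (gaborFam L M N g i j₀) * gaborFam L M N h i j
      = (if ((M:ℤ) ∣ (j - j₀)) then (M:ℂ) else 0) *
          ∑ l ∈ Finset.range L, ∑' n : ℤ, h l (j - n*(N:ℤ)) * (starRingEnd ℂ) (g l (j₀ - n*(N:ℤ))) := by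
  have hX : Summable (fun i : Fin L × ℤ × Fin M =>
      (starRingEnd ℂ) (gaborFam L M N g i j₀) * gaborFam L M N h i j) := by
    apply MW.summable_mul
    · have := MW.summable_sq_gabor L M N hN g hg2 j₀
      simpa using this
    · exact MW.summable_sq_gabor L M N hN h hh2 j
  rw [Summable.tsum_prod' hX (fun l => hX.prod_factor l), tsum_fintype]
  have step : ∀ l : Fin L,
      (∑' p : ℤ × Fin M, (starRingEnd ℂ) (gaborFam L M N g (l, p) j₀) * gaborFam L M N h (l, p) j)
        = (if ((M:ℤ) ∣ (j - j₀)) then (M:ℂ) else 0) *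
            ∑' n : ℤ, h l (j - n*(N:ℤ)) * (starRingEnd ℂ) (g l (j₀ - n*(N:ℤ))) := by
    intro l
    have hXl := hX.prod_factor l
    rw [Summable.tsum_prod' hXl (fun n => hXl.prod_factor n)]
    have hinner : ∀ n : ℤ,
        (∑' m : Fin M, (starRingEnd ℂ) (gaborFam L M N g (l, n, m) j₀) * gaborFam L M N h (l, n, m) j)
          = (if ((M:ℤ) ∣ (j - j₀)) then (M:ℂ) else 0) *
              (h l (j - n*(N:ℤ)) * (starRingEnd ℂ) (g l (j₀ - n*(N:ℤ)))) := by
      intro n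
      rw [tsum_fintype]
      have h1 : ∀ m : Fin M,
          (starRingEnd ℂ) (gaborFam L M N g (l, n, m) j₀) * gaborFam L M N h (l, n, m) j
            = Complex.exp (2 * (Real.pi:ℂ) * Complex.I * ((m : ℕ):ℂ) * (((j - j₀ : ℤ)):ℂ) / (M:ℂ))
              * (h l (j - n * (N:ℤ)) * (starRingEnd ℂ) (g l (j₀ - n * (N:ℤ)))) :=
        fun m => MW.gabor_cross L M N g h (l, n, m) j j₀
      rw [Finset.sum_congr rfl (fun m _ => h1 m), ← Finset.sum_mul, MW.charSum M hM (j - j₀)]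
    rw [tsum_congr hinner, tsum_mul_left]
  rw [Finset.sum_congr rfl (fun l _ => step l), ← Finset.mul_sum]
  congr 1
  exact (Fin.sum_univ_eq_sum_range
    (fun l => ∑' n : ℤ, h l (j - n*(N:ℤ)) * (starRingEnd ℂ) (g l (j₀ - n*(N:ℤ)))) L)
end

noncomputable section
open Complex

lemma MW.matEntry_eq (M N : ℕ) (φ ψ : ℤ → ℂ) (j k : ℤ) :
    (∑' n : ℤ, φ (j - n*(N:ℤ)) * (starRingEnd ℂ) (ψ (j + k*(M:ℤ) - n*(N:ℤ))))
      = matEntry M N φ ψ j k := rfl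

lemma MW.matEntry_shift (M N : ℕ) (φ ψ : ℤ → ℂ) (j k r : ℤ) :
    matEntry M N φ ψ (j + r * (N:ℤ)) k = matEntry M N φ ψ j k := by
  unfold matEntry
  rw [← (Equiv.addRight r).tsum_eq (fun n : ℤ =>
    φ (j + r*(N:ℤ) - n * (N:ℤ)) * (starRingEnd ℂ) (ψ (j + r*(N:ℤ) + k*(M:ℤ) - n*(N:ℤ))))]
  apply tsum_congr
  intro n
  simp only [Equiv.coe_addRight]
  have e1 : j + r*(N:ℤ) - (n + r) * (N:ℤ) = j - n*(N:ℤ) := by ring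
  have e2 : j + r*(N:ℤ) + k*(M:ℤ) - (n + r)*(N:ℤ) = j + k*(M:ℤ) - n*(N:ℤ) := by ring
  rw [e1, e2]

lemma MW.mem_iff_shift {N : ℕ} {S : Set ℤ} (hS : IsPeriodicSet N S) (j n : ℤ) :
    j - n * (N:ℤ) ∈ S ↔ j ∈ S := by
  constructor
  · intro hmem
    have := hS.2 _ hmem n
    simpa using this
  · intro hmem
    have := hS.2 _ hmem (-n)
    simpa [sub_eq_add_neg, neg_mul] using this

lemma MW.matEntry_zero_right {M N : ℕ} {S : Set ℤ} (hS : IsPeriodicSet N S)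
    {ψ : ℤ → ℂ} (hψ : ∀ t ∉ S, ψ t = 0) (φ : ℤ → ℂ) {j k : ℤ}
    (hj : j + k * (M:ℤ) ∉ S) : matEntry M N φ ψ j k = 0 := by
  unfold matEntry
  have : ∀ n : ℤ, φ (j - n*(N:ℤ)) * (starRingEnd ℂ) (ψ (j + k*(M:ℤ) - n*(N:ℤ))) = 0 := by
    intro n
    have : ψ (j + k*(M:ℤ) - n*(N:ℤ)) = 0 :=
      hψ _ (fun hmem => hj ((MW.mem_iff_shift hS _ n).mp hmem))
    simp [this]
  simp [this]

lemma MW.matEntry_zero_left {M N : ℕ} {S : Set ℤ} (hS : IsPeriodicSet N S)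
    {φ : ℤ → ℂ} (hφ : ∀ t ∉ S, φ t = 0) (ψ : ℤ → ℂ) {j : ℤ} (k : ℤ)
    (hj : j ∉ S) : matEntry M N φ ψ j k = 0 := by
  unfold matEntry
  have : ∀ n : ℤ, φ (j - n*(N:ℤ)) * (starRingEnd ℂ) (ψ (j + k*(M:ℤ) - n*(N:ℤ))) = 0 := by
    intro n
    have : φ (j - n*(N:ℤ)) = 0 :=
      hφ _ (fun hmem => hj ((MW.mem_iff_shift hS _ n).mp hmem))
    simp [this]
  simp [this]

def MW.delta (j₀ : ℤ) : ℤ → ℂ := fun j => if j = j₀ then 1 else 0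

lemma MW.delta_sq_summable (j₀ : ℤ) : Summable fun j => ‖MW.delta j₀ j‖^2 := by
  apply summable_of_ne_finset_zero (s := {j₀})
  intro j hj
  simp only [Finset.mem_singleton] at hj
  unfold MW.delta
  simp [hj]

lemma MW.delta_memL2S {S : Set ℤ} {j₀ : ℤ} (hj₀ : j₀ ∈ S) : MemL2S S (MW.delta j₀) := by
  refine ⟨MW.memℓp_of_sq (MW.delta_sq_summable j₀), fun j hj => ?_⟩
  unfold MW.delta
  split
  · exact absurd (by simpa [*] using hj₀) hj
  · rfl

lemma MW.dotP_delta (j₀ : ℤ) (φ : ℤ → ℂ) :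
    dotP (MW.delta j₀) φ = (starRingEnd ℂ) (φ j₀) := by
  unfold dotP
  rw [tsum_eq_single j₀]
  · unfold MW.delta; simp
  · intro j hj
    unfold MW.delta
    simp [hj]
end

noncomputable section
open Complex Filter

lemma MW.gabor_col_sq_summable (L M N : ℕ) (g : ℕ → ℤ → ℂ)
    (hg2 : ∀ l : ℕ, Summable fun t => ‖g l t‖^2) (i : Fin L × ℤ × Fin M) :
    Summable fun j : ℤ => ‖gaborFam L M N g i j‖^2 := by
  simp only [MW.gabor_norm]
  have hinj : Function.Injective (fun j : ℤ => j - i.2.1 * (N:ℤ)) := by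
    intro a b hab
    simpa using hab
  exact (hg2 i.1).comp_injective hinj

lemma MW.normSq2_restr_le {f : ℤ → ℂ} (hf : Summable fun j => ‖f j‖^2) (s : Finset ℤ) :
    normSq2 (MW.restr s f) ≤ normSq2 f := by
  unfold normSq2
  refine Summable.tsum_le_tsum (fun j => ?_) (MW.restr_sq_summable hf s) hf
  unfold MW.restr
  split
  · exact le_rfl
  · rw [norm_zero]; simpa using sq_nonneg ‖f j‖

lemma MW.coef_sq_summable_restr (L M N : ℕ) (hN : 0 < N) (g : ℕ → ℤ → ℂ)
    (hg2 : ∀ l : ℕ, Summable fun t => ‖g l t‖^2) (f : ℤ → ℂ) (s : Finset ℤ) :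
    Summable fun i : Fin L × ℤ × Fin M => ‖dotP (MW.restr s f) (gaborFam L M N g i)‖^2 := by
  have hbound : ∀ i : Fin L × ℤ × Fin M,
      ‖dotP (MW.restr s f) (gaborFam L M N g i)‖^2
        ≤ (s.card : ℝ) * ∑ j ∈ s, ‖f j‖^2 * ‖gaborFam L M N g i j‖^2 := by
    intro i
    rw [MW.dotP_restr]
    have h1 : ‖∑ j ∈ s, f j * (starRingEnd ℂ) (gaborFam L M N g i j)‖
        ≤ ∑ j ∈ s, ‖f j‖ * ‖gaborFam L M N g i j‖ := by
      refine le_trans (norm_sum_le s _) (le_of_eq (Finset.sum_congr rfl fun j _ => ?_))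
      rw [norm_mul, RCLike.norm_conj]
    have h2 : (∑ j ∈ s, ‖f j‖ * ‖gaborFam L M N g i j‖)^2
        ≤ (s.card : ℝ) * ∑ j ∈ s, ‖f j‖^2 * ‖gaborFam L M N g i j‖^2 := by
      have := Finset.sum_mul_sq_le_sq_mul_sq s (fun _ => (1:ℝ))
        (fun j => ‖f j‖ * ‖gaborFam L M N g i j‖)
      simp only [one_pow, one_mul, mul_one, Finset.sum_const, nsmul_eq_mul] at this
      calc (∑ j ∈ s, ‖f j‖ * ‖gaborFam L M N g i j‖)^2
          ≤ (s.card : ℝ) * ∑ j ∈ s, (‖f j‖ * ‖gaborFam L M N g i j‖)^2 := this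
        _ = (s.card : ℝ) * ∑ j ∈ s, ‖f j‖^2 * ‖gaborFam L M N g i j‖^2 := by
            congr 1; exact Finset.sum_congr rfl fun j _ => by ring
    calc ‖∑ j ∈ s, f j * (starRingEnd ℂ) (gaborFam L M N g i j)‖^2
        ≤ (∑ j ∈ s, ‖f j‖ * ‖gaborFam L M N g i j‖)^2 := by
          apply pow_le_pow_left₀ (norm_nonneg _) h1
      _ ≤ _ := h2
  refine Summable.of_nonneg_of_le (fun i => by positivity) hbound ?_
  refine Summable.mul_left _ ?_
  refine summable_sum fun j _ => ?_
  exact ((MW.summable_sq_gabor L M N hN g hg2 j).mul_left _)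

lemma MW.bessel_recovered (L M N : ℕ) (hN : 0 < N) (S : Set ℤ) (g : ℕ → ℤ → ℂ)
    (hgS : ∀ l, MemL2S S (g l)) {B : ℝ} (hB0 : 0 ≤ B)
    (hB : ∀ f : ℤ → ℂ, MemL2S S f →
      ∑' i : Fin L × ℤ × Fin M, ‖dotP f (gaborFam L M N g i)‖ ^ 2 ≤ B * normSq2 f)
    {f : ℤ → ℂ} (hf : MemL2S S f) :
    Summable (fun i : Fin L × ℤ × Fin M => ‖dotP f (gaborFam L M N g i)‖^2) ∧
      ∑' i : Fin L × ℤ × Fin M, ‖dotP f (gaborFam L M N g i)‖^2 ≤ B * normSq2 f := by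
  have hg2 : ∀ l : ℕ, Summable fun t => ‖g l t‖^2 := fun l => MW.sq_summable (hgS l).1
  have hfsq : Summable fun j => ‖f j‖^2 := MW.sq_summable hf.1
  have key : ∀ F : Finset (Fin L × ℤ × Fin M),
      ∑ i ∈ F, ‖dotP f (gaborFam L M N g i)‖^2 ≤ B * normSq2 f := by
    intro F
    have htend : Tendsto (fun s : Finset ℤ =>
        ∑ i ∈ F, ‖dotP (MW.restr s f) (gaborFam L M N g i)‖^2) atTop
        (nhds (∑ i ∈ F, ‖dotP f (gaborFam L M N g i)‖^2)) := by
      apply tendsto_finset_sum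
      intro i _
      have hsum : HasSum (fun j => f j * (starRingEnd ℂ) (gaborFam L M N g i j))
          (dotP f (gaborFam L M N g i)) :=
        (MW.dotP_summable hfsq (MW.gabor_col_sq_summable L M N g hg2 i)).hasSum
      have h1 : Tendsto (fun s : Finset ℤ => dotP (MW.restr s f) (gaborFam L M N g i)) atTop
          (nhds (dotP f (gaborFam L M N g i))) := by
        have heq : (fun s : Finset ℤ => dotP (MW.restr s f) (gaborFam L M N g i))
            = fun s : Finset ℤ => ∑ j ∈ s, f j * (starRingEnd ℂ) (gaborFam L M N g i j) :=
          funext fun s => MW.dotP_restr s f _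
        rw [heq]
        exact hsum
      exact (h1.norm.pow 2)
    refine le_of_tendsto htend (Filter.Eventually.of_forall fun s => ?_)
    calc ∑ i ∈ F, ‖dotP (MW.restr s f) (gaborFam L M N g i)‖^2
        ≤ ∑' i : Fin L × ℤ × Fin M, ‖dotP (MW.restr s f) (gaborFam L M N g i)‖^2 :=
          Summable.sum_le_tsum F (fun i _ => by positivity)
            (MW.coef_sq_summable_restr L M N hN g hg2 f s)
      _ ≤ B * normSq2 (MW.restr s f) := hB _ (MW.restr_memL2S hf s)
      _ ≤ B * normSq2 f := mul_le_mul_of_nonneg_left (MW.normSq2_restr_le hfsq s) hB0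
  have hsummable : Summable (fun i : Fin L × ℤ × Fin M => ‖dotP f (gaborFam L M N g i)‖^2) :=
    summable_of_sum_le (fun i => by positivity) key
  exact ⟨hsummable, Summable.tsum_le_of_sum_le hsummable key⟩
end

end MWauxAll

open Complex Filter in
theorem stmt10 (L M N : ℕ) (hL : 0 < L) (hM : 0 < M) (hN : 0 < N)
    (S : Set ℤ) (hS : IsPeriodicSet N S)
    (g h : ℕ → ℤ → ℂ) (hg : ∀ l, MemL2S S (g l)) (hh : ∀ l, MemL2S S (h l))
    (hBg : IsBesselOn S (gaborFam L M N g)) (hBh : IsBesselOn S (gaborFam L M N h)) :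
    (∀ f : ℤ → ℂ, MemL2S S f → ∀ j : ℤ,
        f j = ∑' i : Fin L × ℤ × Fin M,
          dotP f (gaborFam L M N g i) * gaborFam L M N h i j) ↔
      ((∀ j ∈ S ∩ Set.Ico (0 : ℤ) (N : ℤ),
          ∑ l ∈ Finset.range L, matEntry M N (h l) (g l) j 0 = 1 / (M : ℂ)) ∧
       (∀ j ∈ S ∩ Set.Ico (0 : ℤ) (N : ℤ), ∀ k : ℤ, k ≠ 0 →
          ∑ l ∈ Finset.range L, matEntry M N (h l) (g l) j k = 0)) := by
  have hg2 : ∀ l : ℕ, Summable fun t => ‖g l t‖^2 := fun l => MW.sq_summable (hg l).1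
  have hh2 : ∀ l : ℕ, Summable fun t => ‖h l t‖^2 := fun l => MW.sq_summable (hh l).1
  have hM0 : (M:ℂ) ≠ 0 := by exact_mod_cast hM.ne'
  -- the key delta evaluation, as an equivalence with the Walnut sums
  have hdelta : ∀ (j j₀ : ℤ), j₀ ∈ S →
      (∑' i : Fin L × ℤ × Fin M,
        dotP (MW.delta j₀) (gaborFam L M N g i) * gaborFam L M N h i j)
      = (if ((M:ℤ) ∣ (j - j₀)) then (M:ℂ) else 0) *
          ∑ l ∈ Finset.range L, ∑' n : ℤ,
            h l (j - n*(N:ℤ)) * (starRingEnd ℂ) (g l (j₀ - n*(N:ℤ))) := by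
    intro j j₀ _
    rw [tsum_congr (fun i => by rw [MW.dotP_delta])]
    exact MW.kernel L M N hM hN g h hg2 hh2 j j₀
  constructor
  · -- forward direction
    intro hrec
    constructor
    · intro j hj
      have hjS : j ∈ S := hj.1
      have h1 := hrec (MW.delta j) (MW.delta_memL2S hjS) j
      rw [hdelta j j hjS] at h1
      have hdvd : (M:ℤ) ∣ (j - j) := by simp
      rw [if_pos hdvd] at h1
      have h2 : ∀ l ∈ Finset.range L,
          (∑' n : ℤ, h l (j - n*(N:ℤ)) * (starRingEnd ℂ) (g l (j - n*(N:ℤ))))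
            = matEntry M N (h l) (g l) j 0 := by
        intro l _
        rw [← MW.matEntry_eq]
        apply tsum_congr
        intro n
        congr 2
        ring
      rw [Finset.sum_congr rfl h2] at h1
      have h3 : MW.delta j j = 1 := by unfold MW.delta; simp
      rw [h3] at h1
      rw [eq_div_iff hM0]
      linear_combination -h1
    · intro j hj k hk
      have hjS : j ∈ S := hj.1
      by_cases hj₀ : j + k * (M:ℤ) ∈ S
      · have h1 := hrec (MW.delta (j + k*(M:ℤ))) (MW.delta_memL2S hj₀) j
        rw [hdelta j (j + k*(M:ℤ)) hj₀] at h1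
        have hdvd : (M:ℤ) ∣ (j - (j + k*(M:ℤ))) := ⟨-k, by ring⟩
        rw [if_pos hdvd] at h1
        have h2 : ∀ l ∈ Finset.range L,
            (∑' n : ℤ, h l (j - n*(N:ℤ)) * (starRingEnd ℂ) (g l (j + k*(M:ℤ) - n*(N:ℤ))))
              = matEntry M N (h l) (g l) j k := fun l _ => MW.matEntry_eq M N (h l) (g l) j k
        rw [Finset.sum_congr rfl h2] at h1
        have h3 : MW.delta (j + k*(M:ℤ)) j = 0 := by
          unfold MW.delta
          rw [if_neg]
          intro hcon
          apply hk
          have : k * (M:ℤ) = 0 := by linarith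
          rcases mul_eq_zero.mp this with h' | h'
          · exact h'
          · exact absurd h' (by exact_mod_cast hM.ne')
        rw [h3] at h1
        rcases mul_eq_zero.mp h1.symm with h' | h'
        · exact absurd h' hM0
        · exact h'
      · apply Finset.sum_eq_zero
        intro l _
        exact MW.matEntry_zero_right hS (hg l).2 (h l) hj₀
  · -- backward direction
    rintro ⟨cond1, cond2⟩ f hf j
    obtain ⟨B, hBpos, hBle⟩ := hBg
    have hBrec := fun (f' : ℤ → ℂ) (hf' : MemL2S S f') =>
      MW.bessel_recovered L M N hN S g hg hBpos.le hBle hf'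
    have hfsq : Summable fun t => ‖f t‖^2 := MW.sq_summable hf.1
    have hColh : Summable fun i : Fin L × ℤ × Fin M => ‖gaborFam L M N h i j‖^2 :=
      MW.summable_sq_gabor L M N hN h hh2 j
    -- the kernel value against delta functions
    have Wval : ∀ j₀ : ℤ, j₀ ∈ S →
        (∑' i : Fin L × ℤ × Fin M,
          (starRingEnd ℂ) (gaborFam L M N g i j₀) * gaborFam L M N h i j)
          = MW.delta j₀ j := by
      intro j₀ hj₀
      rw [MW.kernel L M N hM hN g h hg2 hh2 j j₀]
      by_cases hdvd : (M:ℤ) ∣ (j - j₀)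
      · obtain ⟨c, hc⟩ := hdvd
        have hk' : j₀ = j + (-c) * (M:ℤ) := by linarith
        rw [if_pos ⟨c, hc⟩]
        have h2 : ∀ l ∈ Finset.range L,
            (∑' n : ℤ, h l (j - n*(N:ℤ)) * (starRingEnd ℂ) (g l (j₀ - n*(N:ℤ))))
              = matEntry M N (h l) (g l) j (-c) := by
          intro l _
          rw [← MW.matEntry_eq]
          apply tsum_congr
          intro n
          congr 2
          rw [hk']
        rw [Finset.sum_congr rfl h2]
        by_cases hjS : j ∈ S
        · -- reduce to the fundamental domain
          have hjmod : j % (N:ℤ) ∈ S ∩ Set.Ico (0:ℤ) (N:ℤ) := by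
            constructor
            · have : j % (N:ℤ) = j + (-(j / (N:ℤ))) * (N:ℤ) := by
                rw [Int.emod_def]; ring
              rw [this]
              exact hS.2 j hjS _
            · exact Set.mem_Ico.mpr ⟨Int.emod_nonneg j (by exact_mod_cast hN.ne'),
                Int.emod_lt_of_pos j (by exact_mod_cast hN)⟩
          have hshift : ∀ l : ℕ, matEntry M N (h l) (g l) j (-c)
              = matEntry M N (h l) (g l) (j % (N:ℤ)) (-c) := by
            intro l
            have : j = j % (N:ℤ) + (j / (N:ℤ)) * (N:ℤ) := by
              rw [Int.emod_def]; ring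
            conv_lhs => rw [this]
            exact MW.matEntry_shift M N (h l) (g l) (j % (N:ℤ)) (-c) (j / (N:ℤ))
          rw [Finset.sum_congr rfl (fun l _ => hshift l)]
          by_cases hc0 : c = 0
          · subst hc0
            rw [show (-(0:ℤ)) = 0 by ring, cond1 _ hjmod]
            have hjj : j₀ = j := by omega
            unfold MW.delta
            rw [if_pos hjj.symm]
            field_simp
          · rw [cond2 _ hjmod (-c) (by simpa using hc0)]
            have hjj : j ≠ j₀ := by
              intro hcon
              apply hc0
              have : (M:ℤ) * c = 0 := by omega
              rcases mul_eq_zero.mp this with h' | h'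
              · exact absurd h' (by exact_mod_cast hM.ne')
              · exact h'
            unfold MW.delta
            rw [if_neg hjj, mul_zero]
        · -- j outside S : everything vanishes
          rw [Finset.sum_eq_zero (fun l _ => MW.matEntry_zero_left hS (hh l).2 (g l) (-c) hjS)]
          have hjj : j ≠ j₀ := fun hcon => hjS (hcon ▸ hj₀)
          unfold MW.delta
          rw [if_neg hjj, mul_zero]
      · rw [if_neg hdvd, zero_mul]
        have hjj : j ≠ j₀ := by
          intro hcon
          exact hdvd (by simp [hcon])
        unfold MW.delta
        rw [if_neg hjj]
    -- reconstruction on finitely supported truncations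
    have Phi_restr : ∀ s : Finset ℤ,
        (∑' i : Fin L × ℤ × Fin M,
          dotP (MW.restr s f) (gaborFam L M N g i) * gaborFam L M N h i j)
          = MW.restr s f j := by
      intro s
      have hterm : ∀ i : Fin L × ℤ × Fin M,
          dotP (MW.restr s f) (gaborFam L M N g i) * gaborFam L M N h i j
            = ∑ j₀ ∈ s, f j₀ *
                ((starRingEnd ℂ) (gaborFam L M N g i j₀) * gaborFam L M N h i j) := by
        intro i
        rw [MW.dotP_restr, Finset.sum_mul]
        exact Finset.sum_congr rfl fun j₀ _ => by ring
      rw [tsum_congr hterm]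
      rw [Summable.tsum_finsetSum (fun j₀ _ => ?_)]
      swap
      · apply Summable.mul_left
        apply MW.summable_mul
        · have := MW.summable_sq_gabor L M N hN g hg2 j₀
          simpa using this
        · exact hColh
      · have hW : ∀ j₀ ∈ s,
            (∑' i : Fin L × ℤ × Fin M, f j₀ *
              ((starRingEnd ℂ) (gaborFam L M N g i j₀) * gaborFam L M N h i j))
              = f j₀ * MW.delta j₀ j := by
          intro j₀ _
          rw [tsum_mul_left]
          by_cases hj₀S : j₀ ∈ S
          · rw [Wval j₀ hj₀S]
          · rw [hf.2 j₀ hj₀S, zero_mul, zero_mul]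
        rw [Finset.sum_congr rfl hW]
        unfold MW.delta MW.restr
        rw [Finset.sum_congr rfl (fun j₀ _ => by rw [mul_ite, mul_one, mul_zero]),
          Finset.sum_ite_eq]
    -- assemble the limiting argument
    have hfb := hBrec f hf
    have hPhif : Summable (fun i : Fin L × ℤ × Fin M =>
        dotP f (gaborFam L M N g i) * gaborFam L M N h i j) :=
      MW.summable_mul hfb.1 hColh
    set Ch : ℝ := ∑' i : Fin L × ℤ × Fin M, ‖gaborFam L M N h i j‖^2 with hCh
    have hCh0 : 0 ≤ Ch := tsum_nonneg fun i => by positivity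
    set D : ℝ := Real.sqrt B * Real.sqrt Ch + 1 with hD
    have hD0 : 0 < D := by positivity
    have key : ∀ ε : ℝ, 0 < ε →
        ‖f j - ∑' i : Fin L × ℤ × Fin M,
          dotP f (gaborFam L M N g i) * gaborFam L M N h i j‖ ≤ ε := by
      intro ε hε
      obtain ⟨s, hs⟩ : ∃ s : Finset ℤ, (∑' j' : {x // x ∉ s}, ‖f (j':ℤ)‖^2) < (ε / D)^2 := by
        have htail := tendsto_tsum_compl_atTop_zero (fun j' : ℤ => ‖f j'‖^2)
        have hpos : (0:ℝ) < (ε / D)^2 := by positivity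
        have := (htail.eventually (gt_mem_nhds hpos)).exists
        exact this
      set t : ℝ := normSq2 (MW.corestr s f) with ht
      have htt : t = ∑' j' : {x // x ∉ s}, ‖f (j':ℤ)‖^2 := MW.corestr_normSq2 s f
      have ht0 : 0 ≤ t := tsum_nonneg fun j' => by positivity
      have htlt : t < (ε / D)^2 := htt ▸ hs
      have hco := hBrec (MW.corestr s f) (MW.corestr_memL2S hf s)
      have hcosq : Summable fun j' => ‖MW.corestr s f j'‖^2 :=
        MW.corestr_sq_summable hfsq s
      -- split
      have hsplit : (∑' i : Fin L × ℤ × Fin M,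
          dotP f (gaborFam L M N g i) * gaborFam L M N h i j)
          = (∑' i : Fin L × ℤ × Fin M,
              dotP (MW.restr s f) (gaborFam L M N g i) * gaborFam L M N h i j)
            + ∑' i : Fin L × ℤ × Fin M,
                dotP (MW.corestr s f) (gaborFam L M N g i) * gaborFam L M N h i j := by
        rw [← Summable.tsum_add (MW.summable_mul (hBrec _ (MW.restr_memL2S hf s)).1 hColh)
            (MW.summable_mul hco.1 hColh)]
        apply tsum_congr
        intro i
        rw [← add_mul]
        congr 1
        exact MW.dotP_split s _ hfsq (MW.gabor_col_sq_summable L M N g hg2 i)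
      rw [hsplit, Phi_restr s]
      have hfj : f j = MW.restr s f j + MW.corestr s f j := (MW.restr_add_corestr s f j).symm
      rw [hfj]
      have heq : MW.restr s f j + MW.corestr s f j -
          (MW.restr s f j + ∑' i : Fin L × ℤ × Fin M,
            dotP (MW.corestr s f) (gaborFam L M N g i) * gaborFam L M N h i j)
          = MW.corestr s f j - ∑' i : Fin L × ℤ × Fin M,
              dotP (MW.corestr s f) (gaborFam L M N g i) * gaborFam L M N h i j := by ring
      rw [heq]
      have hb1 : ‖MW.corestr s f j‖ ≤ Real.sqrt t :=
        MW.norm_apply_le_sqrt_normSq2 hcosq j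
      have hb2 : ‖∑' i : Fin L × ℤ × Fin M,
          dotP (MW.corestr s f) (gaborFam L M N g i) * gaborFam L M N h i j‖
          ≤ Real.sqrt (B * t) * Real.sqrt Ch := by
        refine le_trans (MW.norm_tsum_mul_le hco.1 hColh) ?_
        apply mul_le_mul_of_nonneg_right _ (Real.sqrt_nonneg _)
        exact Real.sqrt_le_sqrt hco.2
      have hsq : Real.sqrt t < ε / D := by
        have := Real.sqrt_lt_sqrt ht0 htlt
        rwa [Real.sqrt_sq (by positivity)] at this
      calc ‖MW.corestr s f j - _‖ ≤ ‖MW.corestr s f j‖ + ‖_‖ := norm_sub_le _ _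
        _ ≤ Real.sqrt t + Real.sqrt (B * t) * Real.sqrt Ch := add_le_add hb1 hb2
        _ = Real.sqrt t * D := by
            rw [Real.sqrt_mul hBpos.le, hD]
            ring
        _ ≤ (ε / D) * D := mul_le_mul_of_nonneg_right hsq.le hD0.le
        _ = ε := by field_simp
    by_contra hne
    have hpos : 0 < ‖f j - ∑' i : Fin L × ℤ × Fin M,
        dotP f (gaborFam L M N g i) * gaborFam L M N h i j‖ := by
      rw [norm_pos_iff, sub_ne_zero]
      exact hne
    have := key _ (half_pos hpos)
    linarith
end
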